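/- arXiv:2204.13377 — 3 statements merged into one kernel-verified Lean document; each statement's English description precedes it below -/
import Mathlib

section
/- Let Γ be a finite simple edge-labeled graph and let e = {s,t} be an edge of Γ whose label m satisfies m > 2. Then there exist no integers p and q such that t·s^p = s·t^q holds in the Artin group A_Γ (where s and t denote the images of the corresponding generators in A_Γ). -/
open Real

/-- The alternating product `x y x y ⋯` of length `m`. -/
def altElt {M : Type*} [Monoid M] (x y : M) (m : ℕ) : M :=
  ((List.range m).map (fun i => if i % 2 = 0 then x else y)).prod

/-- The Artin relations of an edge-labeled graph: for each edge `{s,t}` with label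
`μ s t = m`, the relation `Π(s,t;m) = Π(t,s;m)`. -/
def artinRels {V : Type*} (G : SimpleGraph V) (μ : V → V → ℕ) : Set (FreeGroup V) :=
  {r | ∃ s t : V, G.Adj s t ∧
    r = altElt (FreeGroup.of s) (FreeGroup.of t) (μ s t) *
        (altElt (FreeGroup.of t) (FreeGroup.of s) (μ s t))⁻¹}

/-- The Artin group of an edge-labeled graph. -/
abbrev ArtinGroup {V : Type*} (G : SimpleGraph V) (μ : V → V → ℕ) :=
  PresentedGroup (artinRels G μ)

/-- A simple graph is a cone if it has at least two vertices and some vertex is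
adjacent to every other vertex. -/
def SimpleGraph.IsCone {V : Type*} (G : SimpleGraph V) : Prop :=
  (∃ v w : V, v ≠ w) ∧ ∃ v₀ : V, ∀ w, w ≠ v₀ → G.Adj v₀ w

/-! ### Auxiliary material: alternating products -/

lemma ANS.altElt_succ {M : Type*} [Monoid M] (x y : M) (m : ℕ) :
    altElt x y (m+1) = altElt x y m * (if m % 2 = 0 then x else y) := by
  simp [altElt, List.range_succ]

lemma ANS.altElt_even {M : Type*} [Monoid M] (x y : M) (j : ℕ) :
    altElt x y (2*j) = (x*y)^j := by
  induction j with
  | zero => simp [altElt]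
  | succ j ih =>
    have h1 : 2*(j+1) = (2*j+1)+1 := by ring
    rw [h1, ANS.altElt_succ, ANS.altElt_succ, ih]
    have h2 : (2*j) % 2 = 0 := by omega
    rw [if_pos h2]
    have h3 : (2*j+1) % 2 = 1 := by omega
    rw [h3]
    simp [pow_succ, mul_assoc]

lemma ANS.altElt_odd {M : Type*} [Monoid M] (x y : M) (j : ℕ) :
    altElt x y (2*j+1) = (x*y)^j * x := by
  rw [ANS.altElt_succ, ANS.altElt_even]
  have h2 : (2*j) % 2 = 0 := by omega
  rw [if_pos h2]

lemma ANS.map_altElt {M N : Type*} [Monoid M] [Monoid N] (φ : M →* N) (x y : M) (m : ℕ) :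
    φ (altElt x y m) = altElt (φ x) (φ y) m := by
  rw [altElt, altElt, ← List.prod_hom _ φ, List.map_map]
  congr 1
  apply List.map_congr_left
  intro i _
  by_cases h : i % 2 = 0 <;> simp [h]

lemma ANS.braid_of_involutions {G : Type*} [Group G] (a b : G) (ha : a*a = 1) (hb : b*b = 1)
    (k : ℕ) (h : (a*b)^k = 1) : altElt a b k = altElt b a k := by
  have hainv : a⁻¹ = a := inv_eq_of_mul_eq_one_right ha
  have hbinv : b⁻¹ = b := inv_eq_of_mul_eq_one_right hb
  have hba : (b*a) = (a*b)⁻¹ := by rw [mul_inv_rev, hainv, hbinv]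
  rcases Nat.even_or_odd k with ⟨j, hj⟩ | ⟨j, hj⟩
  · have hk : k = 2*j := by omega
    subst hk
    rw [ANS.altElt_even, ANS.altElt_even, hba, inv_pow]
    have h1 : ((a*b)^j) * ((a*b)^j) = 1 := by
      rw [← pow_add, show j + j = 2*j by ring]; exact h
    rw [inv_eq_of_mul_eq_one_right h1]
  · subst hj
    rw [ANS.altElt_odd, ANS.altElt_odd, hba, inv_pow]
    have h2j : (a*b)^(2*j) = (a*b)⁻¹ := by
      have h1 : (a*b)^(2*j) * (a*b) = 1 := by rw [← pow_succ]; exact h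
      exact eq_inv_of_mul_eq_one_left h1
    rw [mul_inv_rev, hainv, hbinv] at h2j
    have key : (a*b)^(2*j) * a = b := by rw [h2j, mul_assoc, ha, mul_one]
    calc (a*b)^j * a = ((a*b)^j)⁻¹ * ((a*b)^(2*j) * a) := by group
      _ = ((a*b)^j)⁻¹ * b := by rw [key]

/-! ### Auxiliary material: the reflection representation -/

noncomputable section ANSRep

variable {V : Type*} [Fintype V] [DecidableEq V]

def ANS.Qm (c : V → V → ℝ) (a b : V) : Matrix V V ℝ :=
  Matrix.of fun i j => if i = a then c b j else 0

open ANS in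
lemma ANS.Qm_mul (c : V → V → ℝ) (a b a' b' : V) :
    Qm c a b * Qm c a' b' = c b a' • Qm c a b' := by
  ext i j
  simp only [Qm, Matrix.mul_apply, Matrix.smul_apply, Matrix.of_apply, smul_eq_mul]
  rcases eq_or_ne i a with rfl | h
  · simp only [if_pos rfl]
    rw [Finset.sum_eq_single a']
    · simp
    · intro k _ hk; simp [hk]
    · simp
  · simp [h]

def ANS.Rm (c : V → V → ℝ) (v : V) : Matrix V V ℝ := 1 - (2:ℝ) • ANS.Qm c v v

open ANS in
lemma ANS.Rm_apply (c : V → V → ℝ) (v i j : V) :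
    Rm c v i j = (if i = j then 1 else 0) - 2 * (if i = v then c v j else 0) := by
  simp [Rm, Qm, Matrix.one_apply, Matrix.sub_apply]

open ANS in
lemma ANS.Rm_sq (c : V → V → ℝ) (v : V) (h : c v v = 1) :
    Rm c v * Rm c v = 1 := by
  simp only [Rm, mul_sub, sub_mul, mul_one, one_mul, Matrix.mul_smul, Matrix.smul_mul,
    Qm_mul, h, one_smul, smul_smul]
  module

open ANS in
lemma ANS.Rm_pow_eq_one (c : V → V → ℝ) (u v : V) (k : ℕ) (hk : 2 ≤ k)
    (hcu : c u u = 1) (hcv : c v v = 1)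
    (hc : c u v = - Real.cos (π / k)) (hc' : c v u = c u v) :
    (Rm c u * Rm c v) ^ k = 1 := by
  have hk0 : (k:ℝ) ≠ 0 := by positivity
  set θ : ℝ := π / k with hθ
  have hθpos : 0 < θ := by
    have h2 : (0:ℝ) < k := by exact_mod_cast Nat.lt_of_lt_of_le Nat.zero_lt_two hk
    exact div_pos Real.pi_pos h2
  have hθlt : θ < π := by
    rw [hθ, div_lt_iff₀ (by positivity)]
    nlinarith [Real.pi_pos, show (2:ℝ) ≤ (k:ℝ) from by exact_mod_cast hk]
  have hs : Real.sin θ ≠ 0 := ne_of_gt (Real.sin_pos_of_pos_of_lt_pi hθpos hθlt)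
  have hD : 1 - Real.cos θ ^ 2 ≠ 0 := by
    have h1 := Real.sin_sq_add_cos_sq θ
    intro h
    apply hs
    have h2 : Real.sin θ ^ 2 = 0 := by linarith
    exact pow_eq_zero_iff (n := 2) (by norm_num) |>.mp h2
  set co := Real.cos θ with hco
  have hT : Rm c u * Rm c v =
      1 - (2:ℝ) • Qm c u u - (2:ℝ) • Qm c v v + (4 * c u v) • Qm c u v := by
    simp only [Rm, mul_sub, sub_mul, mul_one, one_mul, Matrix.mul_smul, Matrix.smul_mul,
      Qm_mul, smul_smul]
    module
  have key : ∀ n : ℕ, (Rm c u * Rm c v) ^ n =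
      1 + ((Real.cos (2 * n * θ) - 1) / (1 - co^2)) • Qm c u u
        + ((Real.cos ((2 * n + 1) * θ) - co) / (1 - co^2)) • Qm c u v
        + ((Real.cos ((2 * n - 1) * θ) - co) / (1 - co^2)) • Qm c v u
        + ((Real.cos (2 * n * θ) - 1) / (1 - co^2)) • Qm c v v := by
    intro n
    induction n with
    | zero =>
      push_cast
      rw [show (2*(0:ℝ)-1)*θ = -θ by ring, show (2*(0:ℝ)+1)*θ = θ by ring,
        show 2*(0:ℝ)*θ = 0 by ring, Real.cos_neg, Real.cos_zero]
      simp [← hco]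
    | succ n ih =>
      set C := Real.cos (2 * (n:ℝ) * θ) with hCdef
      set S := Real.sin (2 * (n:ℝ) * θ) with hSdef
      have e1 : Real.cos (2 * ((n:ℝ)+1) * θ) = C * (2*co^2-1) - S * (2 * Real.sin θ * co) := by
        rw [show 2 * ((n:ℝ)+1) * θ = 2*(n:ℝ)*θ + 2*θ by ring, Real.cos_add,
          Real.cos_two_mul, Real.sin_two_mul]
      have e2 : Real.cos ((2 * ((n:ℝ)+1) + 1) * θ)
          = (C * (2*co^2-1) - S * (2 * Real.sin θ * co)) * co
            - (S * (2*co^2-1) + C * (2 * Real.sin θ * co)) * Real.sin θ := by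
        rw [show (2 * ((n:ℝ)+1) + 1) * θ = (2*(n:ℝ)*θ + 2*θ) + θ by ring, Real.cos_add,
          Real.cos_add, Real.sin_add, Real.cos_two_mul, Real.sin_two_mul]
      have e3 : Real.cos ((2 * ((n:ℝ)+1) - 1) * θ) = C * co - S * Real.sin θ := by
        rw [show (2 * ((n:ℝ)+1) - 1) * θ = 2*(n:ℝ)*θ + θ by ring, Real.cos_add]
      have e4 : Real.cos ((2 * (n:ℝ) + 1) * θ) = C * co - S * Real.sin θ := by
        rw [show (2 * (n:ℝ) + 1) * θ = 2*(n:ℝ)*θ + θ by ring, Real.cos_add]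
      have e5 : Real.cos ((2 * (n:ℝ) - 1) * θ) = C * co + S * Real.sin θ := by
        rw [show (2 * (n:ℝ) - 1) * θ = 2*(n:ℝ)*θ - θ by ring, Real.cos_sub]
      have hsin2 : Real.sin θ ^ 2 = 1 - co ^ 2 := by
        have h1 := Real.sin_sq_add_cos_sq θ; linarith
      rw [pow_succ, ih, hT, hc]
      push_cast
      rw [e1, e2, e3, e4, e5]
      simp only [mul_sub, sub_mul, mul_add, add_mul, mul_one, one_mul,
        Matrix.mul_smul, Matrix.smul_mul, Qm_mul, smul_smul, hcu, hcv, hc', hc]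
      match_scalars
      · ring
      · field_simp
        ring
      · field_simp
        linear_combination (2*C*co) * hsin2
      · field_simp
        linear_combination (0:ℝ) * hsin2
      · field_simp
        linear_combination (0:ℝ) * hsin2
  rw [key k,
    show 2 * (k:ℝ) * θ = 2 * π by rw [hθ]; field_simp,
    show (2 * (k:ℝ) + 1) * θ = θ + 2*π by rw [hθ]; field_simp; ring,
    show (2 * (k:ℝ) - 1) * θ = 2*π - θ by rw [hθ]; field_simp,
    Real.cos_two_pi, Real.cos_add_two_pi, Real.cos_two_pi_sub]
  simp [← hco]

end ANSRep

theorem artin_no_square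
    {V : Type*} [Fintype V] (G : SimpleGraph V) (μ : V → V → ℕ)
    (hμsymm : ∀ s t : V, μ s t = μ t s)
    (hμ2 : ∀ s t : V, G.Adj s t → 2 ≤ μ s t)
    (s t : V) (hadj : G.Adj s t) (hm : 2 < μ s t) :
    ¬ ∃ p q : ℤ,
      (PresentedGroup.of t : ArtinGroup G μ) * (PresentedGroup.of s : ArtinGroup G μ) ^ p =
        (PresentedGroup.of s : ArtinGroup G μ) * (PresentedGroup.of t : ArtinGroup G μ) ^ q := by
  letI : DecidableEq V := Classical.decEq V
  rintro ⟨p, q, heq⟩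
  have hst : s ≠ t := hadj.ne
  -- the Coxeter cosine matrix
  set c : V → V → ℝ := fun x y => if x = y then 1 else - Real.cos (Real.pi / μ x y) with hcdef
  have hcd : ∀ v, c v v = 1 := by intro v; simp [hcdef]
  have hcoff : ∀ x y : V, x ≠ y → c x y = - Real.cos (Real.pi / μ x y) := by
    intro x y h; simp [hcdef, h]
  have hcsym : ∀ x y : V, c y x = c x y := by
    intro x y
    rcases eq_or_ne x y with rfl | h
    · rfl
    · rw [hcoff _ _ h, hcoff _ _ (Ne.symm h), hμsymm x y]
  have hsq : ∀ v, ANS.Rm c v * ANS.Rm c v = 1 := fun v => ANS.Rm_sq c v (hcd v)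
  -- reflections as units
  set f : V → (Matrix V V ℝ)ˣ := fun v => ⟨ANS.Rm c v, ANS.Rm c v, hsq v, hsq v⟩ with hfdef
  have hfval : ∀ v, (f v : Matrix V V ℝ) = ANS.Rm c v := fun v => rfl
  have hfsq : ∀ v, f v * f v = 1 := by
    intro v; ext : 1; rw [Units.val_mul, hfval, hsq, Units.val_one]
  -- the representation
  have hrel : ∀ r ∈ artinRels G μ, FreeGroup.lift f r = 1 := by
    rintro r ⟨s', t', hadj', rfl⟩
    have hst' : s' ≠ t' := hadj'.ne
    have hk : 2 ≤ μ s' t' := hμ2 s' t' hadj'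
    have hpow : (f s' * f t') ^ (μ s' t') = 1 := by
      ext : 1
      rw [Units.val_pow_eq_pow_val, Units.val_mul, hfval, hfval, Units.val_one]
      exact ANS.Rm_pow_eq_one c s' t' (μ s' t') hk (hcd s') (hcd t')
        (hcoff s' t' hst') (by rw [hcsym, hcoff s' t' hst'])
    have hbraid := ANS.braid_of_involutions (f s') (f t') (hfsq s') (hfsq t') (μ s' t') hpow
    rw [map_mul, map_inv, ANS.map_altElt, ANS.map_altElt, FreeGroup.lift_apply_of,
      FreeGroup.lift_apply_of, hbraid]
    simp
  set φ : ArtinGroup G μ →* (Matrix V V ℝ)ˣ := PresentedGroup.toGroup hrel with hφdef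
  have hφof : ∀ v, φ (PresentedGroup.of v) = f v := fun v => PresentedGroup.toGroup.of hrel
  have him : f t * (f s) ^ p = f s * (f t) ^ q := by
    have := congrArg φ heq
    simpa [map_mul, map_zpow, hφof] using this
  -- zpowers of involutions
  have hzp : ∀ (v : V) (r : ℤ), (f v) ^ r = 1 ∨ (f v) ^ r = f v := by
    intro v r
    have h2 : (f v) ^ (2:ℤ) = 1 := by
      rw [zpow_two]; exact hfsq v
    rcases Int.even_or_odd r with ⟨j, hj⟩ | ⟨j, hj⟩
    · left
      rw [hj, show j + j = 2 * j by ring, zpow_mul, h2, one_zpow]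
    · right
      rw [hj, zpow_add, zpow_mul, h2, one_zpow, one_mul, zpow_one]
  -- entry computations
  have hRss : ANS.Rm c s s s = -1 := by rw [ANS.Rm_apply, if_pos rfl, if_pos rfl, hcd]; norm_num
  have hRtss : ANS.Rm c t s s = 1 := by rw [ANS.Rm_apply, if_pos rfl, if_neg hst]; norm_num
  have hRtt : ANS.Rm c t t t = -1 := by rw [ANS.Rm_apply, if_pos rfl, if_pos rfl, hcd]; norm_num
  have hRstt : ANS.Rm c s t t = 1 := by
    rw [ANS.Rm_apply, if_pos rfl, if_neg (Ne.symm hst)]; norm_num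
  have hfs_ne_one : f s ≠ 1 := by
    intro h
    have h1 : ANS.Rm c s = 1 := by rw [← hfval, h, Units.val_one]
    have := congrFun (congrFun h1 s) s
    rw [hRss, Matrix.one_apply_eq] at this
    norm_num at this
  have hft_ne_one : f t ≠ 1 := by
    intro h
    have h1 : ANS.Rm c t = 1 := by rw [← hfval, h, Units.val_one]
    have := congrFun (congrFun h1 t) t
    rw [hRtt, Matrix.one_apply_eq] at this
    norm_num at this
  have hfs_ne_ft : f t ≠ f s := by
    intro h
    have h1 : ANS.Rm c t = ANS.Rm c s := by rw [← hfval, ← hfval, h]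
    have := congrFun (congrFun h1 s) s
    rw [hRss, hRtss] at this
    norm_num at this
  -- non-commuting
  have hcst : c s t ≠ 0 := by
    rw [hcoff s t hst]
    have h3 : (3:ℝ) ≤ (μ s t : ℝ) := by exact_mod_cast hm
    have hpos : 0 < Real.cos (Real.pi / μ s t) := by
      apply Real.cos_pos_of_mem_Ioo
      constructor
      · have : 0 < Real.pi / μ s t := by positivity
        nlinarith [Real.pi_pos]
      · rw [div_lt_iff₀ (by positivity)]
        nlinarith [Real.pi_pos]
    intro h
    linarith
  have hnc : f t * f s ≠ f s * f t := by
    intro h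
    have h1 : ANS.Rm c t * ANS.Rm c s = ANS.Rm c s * ANS.Rm c t := by
      have := congrArg Units.val h
      simpa [Units.val_mul, hfval] using this
    have hts : (ANS.Rm c t * ANS.Rm c s) s t = -2 * c s t := by
      rw [Matrix.mul_apply]
      rw [Finset.sum_eq_single s]
      · rw [ANS.Rm_apply, ANS.Rm_apply, if_pos rfl, if_neg hst, if_pos rfl, if_neg hst]
        ring
      · intro k _ hk
        rw [ANS.Rm_apply, if_neg (Ne.symm hk), if_neg hst]
        ring
      · simp
    have hsts : (ANS.Rm c s * ANS.Rm c t) s t = 2 * c s t := by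
      rw [Matrix.mul_apply]
      rw [Finset.sum_eq_single t]
      · rw [ANS.Rm_apply, ANS.Rm_apply, if_pos rfl, if_neg hst, if_pos rfl, if_pos rfl, hcd]
        ring
      · intro k _ hk
        rw [ANS.Rm_apply (c := c) (v := t) (i := k) (j := t), if_neg hk, if_neg hk]
        ring
      · simp
    have := congrFun (congrFun h1 s) t
    rw [hts, hsts] at this
    have : c s t = 0 := by linarith
    exact hcst this
  -- case analysis
  rcases hzp s p with hp | hp <;> rcases hzp t q with hq | hq <;> rw [hp, hq] at him
  · rw [mul_one, mul_one] at him
    exact hfs_ne_ft him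
  · rw [mul_one] at him
    apply hfs_ne_one
    have h1 : (1 : (Matrix V V ℝ)ˣ) * f t = f s * f t := by rw [one_mul, ← him]
    exact (mul_right_cancel h1).symm
  · rw [mul_one] at him
    apply hft_ne_one
    have h1 : f t * f s = 1 * f s := by rw [one_mul, him]
    exact mul_right_cancel h1
  · exact hnc him
end

section
/- Let Γ be a finite simple edge-labeled graph, let e = {s,t} be an edge of Γ whose label m satisfies m > 2, and let U be a subset of the vertex set V that spans a clique in Γ and contains both s and t. Let τ ∈ A_Γ be the image of the alternating word sts⋯s of length m if m is odd, and of length m+1 if m is even. Then there is no element g of the subgroup A_{U∖{s}} of A_Γ generated by U∖{s} such that g⁻¹τ lies in the subgroup A_{U∖{t}} generated by U∖{t} (i.e., g·A_{U∖{t}} = τ·A_{U∖{t}} is impossible); and likewise there is no element g of A_{U∖{t}} such that g⁻¹τ lies in A_{U∖{s}}. -/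
set_option linter.unusedSectionVars false
set_option maxHeartbeats 1000000
section ATLaux
open Real
namespace ATL



lemma altElt_zero {M : Type*} [Monoid M] (x y : M) : altElt x y 0 = 1 := rfl

lemma altElt_succ_left {M : Type*} [Monoid M] (x y : M) (m : ℕ) :
    altElt x y (m + 1) = x * altElt y x m := by
  unfold altElt
  rw [List.range_succ_eq_map]
  simp only [List.map_cons, List.prod_cons, List.map_map]
  congr 2
  refine List.map_congr_left (fun i _ => ?_)
  simp only [Function.comp_apply, Nat.succ_mod_two_eq_zero_iff]
  rcases Nat.even_or_odd i with h | h
  · have h2 : i % 2 = 0 := Nat.even_iff.mp h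
    simp [h2]
  · have h2 : i % 2 = 1 := Nat.odd_iff.mp h
    simp [h2]

lemma mul_pow_swap {G : Type*} [Monoid G] (x y : G) (n : ℕ) :
    x * (y * x) ^ n = (x * y) ^ n * x := by
  induction n with
  | zero => simp
  | succ n ih =>
    rw [pow_succ, pow_succ, ← mul_assoc, ih, mul_assoc, mul_assoc, mul_assoc]

lemma altElt_even {G : Type*} [Monoid G] (x y : G) (k : ℕ) :
    altElt x y (2 * k) = (x * y) ^ k := by
  induction k generalizing x y with
  | zero => simp [altElt_zero]
  | succ k ih =>
    rw [show 2 * (k+1) = (2*k+1)+1 by ring, altElt_succ_left, altElt_succ_left, ih,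
      ← mul_assoc, ← pow_succ']

lemma altElt_odd {G : Type*} [Monoid G] (x y : G) (k : ℕ) :
    altElt x y (2 * k + 1) = (x * y) ^ k * x := by
  rw [altElt_succ_left, altElt_even]
  exact mul_pow_swap x y k

/-- braid relation from involutions and `(xy)^m = 1`. -/
lemma braid_of_invol {G : Type*} [Group G] (x y : G) (hx : x * x = 1) (hy : y * y = 1)
    {m : ℕ} (hxy : (x * y) ^ m = 1) : altElt x y m = altElt y x m := by
  have hxi : x⁻¹ = x := inv_eq_of_mul_eq_one_right hx
  have hyi : y⁻¹ = y := inv_eq_of_mul_eq_one_right hy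
  have hyx : y * x = (x * y)⁻¹ := by rw [mul_inv_rev, hxi, hyi]
  obtain ⟨k, hk⟩ | ⟨k, hk⟩ := Nat.even_or_odd m
  · rw [show m = 2 * k by omega] at hxy ⊢
    rw [altElt_even, altElt_even, hyx, inv_pow]
    refine eq_inv_of_mul_eq_one_left ?_
    rw [← pow_add, show k + k = 2*k by ring, hxy]
  · rw [hk] at hxy ⊢
    rw [altElt_odd, altElt_odd, hyx, inv_pow]
    have key : (x*y)^(2*k) * x = y := by
      rw [pow_succ, ← mul_assoc] at hxy
      rw [eq_inv_of_mul_eq_one_left hxy, hyi]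
    nth_rewrite 3 [← key]
    rw [show 2*k = k + k by ring, pow_add, ← mul_assoc, ← mul_assoc,
      inv_mul_cancel, one_mul]


lemma srec (θ x : ℝ) : Real.sin (x + θ) = 2 * Real.cos θ * Real.sin x - Real.sin (x - θ) := by
  rw [Real.sin_add, Real.sin_sub]; ring

lemma ssq (θ x : ℝ) : Real.sin (x + θ) ^ 2 + Real.sin x ^ 2
    - 2 * Real.cos θ * Real.sin x * Real.sin (x + θ) = Real.sin θ ^ 2 := by
  rw [Real.sin_add]
  nlinarith [Real.sin_sq_add_cos_sq x, Real.sin_sq_add_cos_sq θ]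

section TwoGen

variable {E : Type*} [AddCommGroup E] [Module ℝ E]
variable {σa σb : E ≃ₗ[ℝ] E} {fa fb : E →ₗ[ℝ] ℝ} {a b : E} {θ : ℝ}

lemma lmul_apply (f g : E ≃ₗ[ℝ] E) (x : E) : (f * g) x = f (g x) := rfl
lemma lone_apply (x : E) : (1 : E ≃ₗ[ℝ] E) x = x := rfl

variable (hA : ∀ x, σa x = x - fa x • a) (hB : ∀ x, σb x = x - fb x • b)
variable (haa : fa a = 2) (hbb : fb b = 2)
variable (hab : fa b = -(2 * Real.cos θ)) (hba : fb a = -(2 * Real.cos θ))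

include hA haa in
lemma sq_one_refl : σa * σa = 1 := by
  refine LinearEquiv.ext fun x => ?_
  rw [lmul_apply, hA, hA, map_sub, map_smul, haa, lone_apply, smul_eq_mul]
  module

include hA hB haa hbb hab hba

private lemma sig_aa : σa a = -a := by rw [hA, haa]; module
private lemma sig_bb : σb b = -b := by rw [hB, hbb]; module
private lemma sig_ab : σa b = b + (2 * Real.cos θ) • a := by rw [hA, hab]; module
private lemma sig_ba : σb a = a + (2 * Real.cos θ) • b := by rw [hB, hba]; module

private lemma g_a : (σa * σb) a
    = (4 * Real.cos θ ^ 2 - 1) • a + (2 * Real.cos θ) • b := by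
  rw [lmul_apply, sig_ba hA hB haa hbb hab hba, map_add, map_smul,
    sig_aa hA hB haa hbb hab hba, sig_ab hA hB haa hbb hab hba]
  module

private lemma g_b : (σa * σb) b = (-(2 * Real.cos θ)) • a + (-1 : ℝ) • b := by
  rw [lmul_apply, sig_bb hA hB haa hbb hab hba, map_neg,
    sig_ab hA hB haa hbb hab hba]
  module

/-- the orbit of `a` and `b` under powers of `σa σb`. -/
lemma orbit (k : ℕ) :
    Real.sin θ • ((σa * σb) ^ k) a
      = Real.sin ((2*(k:ℝ)+1)*θ) • a + Real.sin ((2*(k:ℝ))*θ) • b ∧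
    Real.sin θ • ((σa * σb) ^ k) b
      = (-Real.sin ((2*(k:ℝ))*θ)) • a + (-Real.sin ((2*(k:ℝ)-1)*θ)) • b := by
  set c := Real.cos θ with hc
  induction k with
  | zero =>
    constructor
    · rw [pow_zero, lone_apply]
      norm_num
      try module
    · rw [pow_zero, lone_apply]
      norm_num [Real.sin_neg]
      try module
  | succ k ih =>
    obtain ⟨iha, ihb⟩ := ih
    set K := (k : ℝ) with hK
    have hcast : ((k+1 : ℕ) : ℝ) = K + 1 := by push_cast; ring
    have r1 : Real.sin ((2*K+2)*θ) = 2*c*Real.sin ((2*K+1)*θ) - Real.sin ((2*K)*θ) := by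
      have h := srec θ ((2*K+1)*θ)
      rw [show (2*K+1)*θ+θ = (2*K+2)*θ by ring, show (2*K+1)*θ-θ = (2*K)*θ by ring] at h
      exact h
    have r0 : Real.sin ((2*K+1)*θ) = 2*c*Real.sin ((2*K)*θ) - Real.sin ((2*K-1)*θ) := by
      have h := srec θ ((2*K)*θ)
      rw [show (2*K)*θ+θ = (2*K+1)*θ by ring, show (2*K)*θ-θ = (2*K-1)*θ by ring] at h
      exact h
    have r2 : Real.sin ((2*K+3)*θ) = 2*c*Real.sin ((2*K+2)*θ) - Real.sin ((2*K+1)*θ) := by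
      have h := srec θ ((2*K+2)*θ)
      rw [show (2*K+2)*θ+θ = (2*K+3)*θ by ring, show (2*K+2)*θ-θ = (2*K+1)*θ by ring] at h
      exact h
    have happ_a : ((σa * σb) ^ (k+1)) a
        = (4*c^2-1) • (((σa * σb) ^ k) a) + (2*c) • (((σa * σb) ^ k) b) := by
      rw [pow_succ, lmul_apply, g_a hA hB haa hbb hab hba, map_add, map_smul, map_smul]
    have happ_b : ((σa * σb) ^ (k+1)) b
        = (-(2*c)) • (((σa * σb) ^ k) a) + (-1 : ℝ) • (((σa * σb) ^ k) b) := by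
      rw [pow_succ, lmul_apply, g_b hA hB haa hbb hab hba, map_add, map_smul, map_smul]
    constructor
    · rw [happ_a, smul_add, smul_comm (Real.sin θ) ((4:ℝ)*c^2-1),
        smul_comm (Real.sin θ) ((2:ℝ)*c), iha, ihb, hcast]
      rw [show (2*(K+1)+1)*θ = (2*K+3)*θ by ring, show (2*(K+1))*θ = (2*K+2)*θ by ring,
        show Real.sin ((2*K+3)*θ) = (4*c^2-1) * Real.sin ((2*K+1)*θ) - 2*c*Real.sin ((2*K)*θ)
          by linear_combination r2 + 2*c*r1,
        show Real.sin ((2*K+2)*θ) = 2*c*Real.sin ((2*K+1)*θ) - Real.sin ((2*K)*θ)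
          from r1,
        show Real.sin ((2*K+1)*θ) = 2*c*Real.sin ((2*K)*θ) - Real.sin ((2*K-1)*θ) from r0]
      module
    · rw [happ_b, smul_add, smul_comm (Real.sin θ) (-((2:ℝ)*c)),
        smul_comm (Real.sin θ) ((-1 : ℝ)), iha, ihb, hcast]
      rw [show (2*(K+1))*θ = (2*K+2)*θ by ring, show (2*(K+1)-1)*θ = (2*K+1)*θ by ring,
        show Real.sin ((2*K+2)*θ) = 2*c*Real.sin ((2*K+1)*θ) - Real.sin ((2*K)*θ) from r1,
        show Real.sin ((2*K+1)*θ) = 2*c*Real.sin ((2*K)*θ) - Real.sin ((2*K-1)*θ) from r0]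
      module

omit haa hbb hab hba in
/-- fixed vectors. -/
lemma g_fix {x : E} (h0a : fa x = 0) (h0b : fb x = 0) (k : ℕ) :
    ((σa * σb) ^ k) x = x := by
  have hax : σa x = x := by rw [hA, h0a, zero_smul, sub_zero]
  have hbx : σb x = x := by rw [hB, h0b, zero_smul, sub_zero]
  induction k with
  | zero => rw [pow_zero, lone_apply]
  | succ k ih => rw [pow_succ, lmul_apply, lmul_apply, hbx, hax, ih]

/-- `(σa σb) ^ n = 1` where `θ = π / n`. -/
theorem g_pow_eq_one (n : ℕ) (hn : 2 ≤ n) (hθ : θ = Real.pi / n) :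
    (σa * σb) ^ n = 1 := by
  set c := Real.cos θ with hc
  have hnR : (0:ℝ) < (n:ℝ) := by positivity
  have hθpos : 0 < θ := by rw [hθ]; positivity
  have hθlt : θ < Real.pi := by
    rw [hθ]
    calc Real.pi / n ≤ Real.pi / 2 := by
          apply div_le_div_of_nonneg_left Real.pi_pos.le (by norm_num)
          exact_mod_cast hn
      _ < Real.pi := by linarith [Real.pi_pos]
  have hsin : Real.sin θ ≠ 0 := ne_of_gt (Real.sin_pos_of_pos_of_lt_pi hθpos hθlt)
  have h2pi : (2*(n:ℝ))*θ = 2*Real.pi := by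
    rw [hθ]; field_simp
  have hS1 : Real.sin ((2*(n:ℝ)+1)*θ) = Real.sin θ := by
    rw [show (2*(n:ℝ)+1)*θ = θ + (2*(n:ℝ))*θ by ring, h2pi, Real.sin_add_two_pi]
  have hS0 : Real.sin ((2*(n:ℝ))*θ) = 0 := by
    rw [h2pi, Real.sin_two_pi]
  have hSm : Real.sin ((2*(n:ℝ)-1)*θ) = -Real.sin θ := by
    rw [show (2*(n:ℝ)-1)*θ = (2*(n:ℝ))*θ - θ by ring, h2pi, Real.sin_two_pi_sub]
  have horb := orbit hA hB haa hbb hab hba n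
  have hga : ((σa * σb) ^ n) a = a := by
    have h := horb.1
    rw [hS1, hS0, zero_smul, add_zero] at h
    exact smul_right_injective E hsin h
  have hgb : ((σa * σb) ^ n) b = b := by
    have h := horb.2
    rw [hS0, hSm, neg_neg, neg_zero, zero_smul, zero_add] at h
    exact smul_right_injective E hsin h
  -- decomposition of an arbitrary vector
  have hc2 : 1 - c^2 ≠ 0 := by
    have := Real.sin_sq_add_cos_sq θ
    have : 1 - c^2 = Real.sin θ ^ 2 := by rw [hc]; nlinarith
    rw [this]
    positivity
  refine LinearEquiv.ext fun x => ?_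
  set A := (fa x + c * fb x)/(2*(1-c^2)) with hAdef
  set B := (c * fa x + fb x)/(2*(1-c^2)) with hBdef
  set q := x - A • a - B • b with hq
  have hfaq : fa q = 0 := by
    rw [hq, map_sub, map_sub, map_smul, map_smul, haa, hab, hAdef, hBdef,
      smul_eq_mul, smul_eq_mul]
    field_simp
    ring
  have hfbq : fb q = 0 := by
    rw [hq, map_sub, map_sub, map_smul, map_smul, hba, hbb, hAdef, hBdef,
      smul_eq_mul, smul_eq_mul]
    field_simp
    ring
  have hxq : x = A • a + B • b + q := by rw [hq]; module
  rw [lone_apply, hxq, map_add, map_add, map_smul, map_smul, hga, hgb,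
    g_fix hA hB hfaq hfbq]

/-- The braid relation. -/
theorem braid_rel (n : ℕ) (hn : 2 ≤ n) (hθ : θ = Real.pi / n) :
    altElt σa σb n = altElt σb σa n := by
  refine braid_of_invol σa σb ?_ ?_ (g_pow_eq_one hA hB haa hbb hab hba n hn hθ)
  · exact sq_one_refl hA haa
  · exact sq_one_refl hB hbb

section Dyn

variable (hsin : Real.sin θ ≠ 0) (x0 : E)

omit hB hbb hba in
include haa hab in
lemma stepA0 (h0a : fa x0 = 0) (p q : ℝ) :
    σa (x0 + p • a + q • b) = x0 + (-p + 2*Real.cos θ*q) • a + q • b := by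
  rw [hA, map_add, map_add, map_smul, map_smul, h0a, haa, hab, smul_eq_mul, smul_eq_mul]
  module

omit hB hbb hba in
include haa hab in
lemma stepA1 (h0a : fa x0 = 1) (p q : ℝ) :
    σa (x0 + p • a + q • b) = x0 + (-p + 2*Real.cos θ*q - 1) • a + q • b := by
  rw [hA, map_add, map_add, map_smul, map_smul, h0a, haa, hab, smul_eq_mul, smul_eq_mul]
  module

omit hA haa hab in
include hbb hba in
lemma stepB0 (h0b : fb x0 = 0) (p q : ℝ) :
    σb (x0 + p • a + q • b) = x0 + p • a + (2*Real.cos θ*p - q) • b := by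
  rw [hB, map_add, map_add, map_smul, map_smul, h0b, hbb, hba, smul_eq_mul, smul_eq_mul]
  module

omit hA haa hab in
include hbb hba in
lemma stepB1 (h0b : fb x0 = 1) (p q : ℝ) :
    σb (x0 + p • a + q • b) = x0 + p • a + (2*Real.cos θ*p - q - 1) • b := by
  rw [hB, map_add, map_add, map_smul, map_smul, h0b, hbb, hba, smul_eq_mul, smul_eq_mul]
  module

-- Case 1 : `fa x0 = 0`, `fb x0 = 1`.
include hsin in
lemma dyn1_even (h0a : fa x0 = 0) (h0b : fb x0 = 1) (k : ℕ) :
    (altElt σb σa (2*k) : E ≃ₗ[ℝ] E) x0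
      = x0 + (-(Real.sin (((k:ℝ)-1)*θ) * Real.sin ((k:ℝ)*θ))/Real.sin θ^2) • a
           + (-(Real.sin ((k:ℝ)*θ)^2)/Real.sin θ^2) • b := by
  set c := Real.cos θ with hc
  induction k with
  | zero =>
    norm_num [altElt, lone_apply, Real.sin_zero]
  | succ k ih =>
    set K := (k:ℝ) with hK
    have hcast : ((k+1 : ℕ) : ℝ) = K + 1 := by push_cast; ring
    have halt : (altElt σb σa (2*(k+1)) : E ≃ₗ[ℝ] E)
        = σb * (σa * altElt σb σa (2*k)) := by
      rw [show 2*(k+1) = (2*k+1)+1 by ring, altElt_succ_left, altElt_succ_left]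
    have r0 : Real.sin ((K+1)*θ) = 2*c*Real.sin (K*θ) - Real.sin ((K-1)*θ) := by
      have h := srec θ (K*θ)
      rw [show K*θ+θ = (K+1)*θ by ring, show K*θ-θ = (K-1)*θ by ring] at h
      exact h
    have hsq : Real.sin ((K+1)*θ)^2 + Real.sin (K*θ)^2
        - 2*c*Real.sin (K*θ)*Real.sin ((K+1)*θ) = Real.sin θ^2 := by
      have h := ssq θ (K*θ)
      rw [show K*θ+θ = (K+1)*θ by ring] at h
      exact h
    have hn1 : -(-(Real.sin ((K-1)*θ) * Real.sin (K*θ))/Real.sin θ^2)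
        + 2*c*(-(Real.sin (K*θ)^2)/Real.sin θ^2)
        = -(Real.sin (K*θ) * Real.sin ((K+1)*θ))/Real.sin θ^2 := by
      field_simp
      rw [show θ * (K + 1) = (K + 1) * θ by ring]
      linear_combination Real.sin (K*θ) * r0
    have hn2 : 2*c*(-(Real.sin (K*θ) * Real.sin ((K+1)*θ))/Real.sin θ^2)
        - (-(Real.sin (K*θ)^2)/Real.sin θ^2) - 1
        = -(Real.sin ((K+1)*θ)^2)/Real.sin θ^2 := by
      field_simp
      rw [show θ * (K + 1) = (K + 1) * θ by ring]
      linear_combination hsq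
    rw [halt, lmul_apply, lmul_apply, ih,
      stepA0 hA haa hab x0 h0a _ _, stepB1 hB hbb hba x0 h0b _ _, hcast,
      show (K+1-1)*θ = K*θ by ring, hn1, hn2]

include hsin in
lemma dyn1_odd (h0a : fa x0 = 0) (h0b : fb x0 = 1) (k : ℕ) :
    (altElt σa σb (2*k+1) : E ≃ₗ[ℝ] E) x0
      = x0 + (-(Real.sin ((k:ℝ)*θ) * Real.sin (((k:ℝ)+1)*θ))/Real.sin θ^2) • a
           + (-(Real.sin ((k:ℝ)*θ)^2)/Real.sin θ^2) • b := by
  set c := Real.cos θ with hc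
  set K := (k:ℝ) with hK
  have r0 : Real.sin ((K+1)*θ) = 2*c*Real.sin (K*θ) - Real.sin ((K-1)*θ) := by
    have h := srec θ (K*θ)
    rw [show K*θ+θ = (K+1)*θ by ring, show K*θ-θ = (K-1)*θ by ring] at h
    exact h
  have hn1 : -(-(Real.sin ((K-1)*θ) * Real.sin (K*θ))/Real.sin θ^2)
      + 2*c*(-(Real.sin (K*θ)^2)/Real.sin θ^2)
      = -(Real.sin (K*θ) * Real.sin ((K+1)*θ))/Real.sin θ^2 := by
    field_simp
    rw [show θ * (K + 1) = (K + 1) * θ by ring]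
    linear_combination Real.sin (K*θ) * r0
  rw [altElt_succ_left, lmul_apply, dyn1_even hA hB haa hbb hab hba hsin x0 h0a h0b k,
    stepA0 hA haa hab x0 h0a _ _, hn1]

-- Case 2 : `fa x0 = 1`, `fb x0 = 0`.
include hsin in
lemma dyn2_even (h0a : fa x0 = 1) (h0b : fb x0 = 0) (k : ℕ) :
    (altElt σb σa (2*k) : E ≃ₗ[ℝ] E) x0
      = x0 + (-(Real.sin ((k:ℝ)*θ)^2)/Real.sin θ^2) • a
           + (-(Real.sin ((k:ℝ)*θ) * Real.sin (((k:ℝ)+1)*θ))/Real.sin θ^2) • b := by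
  set c := Real.cos θ with hc
  induction k with
  | zero =>
    norm_num [altElt, lone_apply, Real.sin_zero]
  | succ k ih =>
    set K := (k:ℝ) with hK
    have hcast : ((k+1 : ℕ) : ℝ) = K + 1 := by push_cast; ring
    have halt : (altElt σb σa (2*(k+1)) : E ≃ₗ[ℝ] E)
        = σb * (σa * altElt σb σa (2*k)) := by
      rw [show 2*(k+1) = (2*k+1)+1 by ring, altElt_succ_left, altElt_succ_left]
    have r1 : Real.sin ((K+2)*θ) = 2*c*Real.sin ((K+1)*θ) - Real.sin (K*θ) := by
      have h := srec θ ((K+1)*θ)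
      rw [show (K+1)*θ+θ = (K+2)*θ by ring, show (K+1)*θ-θ = K*θ by ring] at h
      exact h
    have hsq : Real.sin ((K+1)*θ)^2 + Real.sin (K*θ)^2
        - 2*c*Real.sin (K*θ)*Real.sin ((K+1)*θ) = Real.sin θ^2 := by
      have h := ssq θ (K*θ)
      rw [show K*θ+θ = (K+1)*θ by ring] at h
      exact h
    have hn1 : -(-(Real.sin (K*θ)^2)/Real.sin θ^2)
        + 2*c*(-(Real.sin (K*θ) * Real.sin ((K+1)*θ))/Real.sin θ^2) - 1
        = -(Real.sin ((K+1)*θ)^2)/Real.sin θ^2 := by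
      field_simp
      rw [show θ * (K + 1) = (K + 1) * θ by ring]
      linear_combination hsq
    have hn2 : 2*c*(-(Real.sin ((K+1)*θ)^2)/Real.sin θ^2)
        - (-(Real.sin (K*θ) * Real.sin ((K+1)*θ))/Real.sin θ^2)
        = -(Real.sin ((K+1)*θ) * Real.sin ((K+2)*θ))/Real.sin θ^2 := by
      field_simp
      rw [show θ * (K + 2) = (K + 2) * θ by ring]
      linear_combination Real.sin ((K+1)*θ) * r1
    rw [halt, lmul_apply, lmul_apply, ih,
      stepA1 hA haa hab x0 h0a _ _, stepB0 hB hbb hba x0 h0b _ _, hcast, hn1, hn2,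
      show (K+2)*θ = (K+1+1)*θ by ring]

include hsin in
lemma dyn2_odd (h0a : fa x0 = 1) (h0b : fb x0 = 0) (k : ℕ) :
    (altElt σa σb (2*k+1) : E ≃ₗ[ℝ] E) x0
      = x0 + (-(Real.sin (((k:ℝ)+1)*θ)^2)/Real.sin θ^2) • a
           + (-(Real.sin ((k:ℝ)*θ) * Real.sin (((k:ℝ)+1)*θ))/Real.sin θ^2) • b := by
  set c := Real.cos θ with hc
  set K := (k:ℝ) with hK
  have hsq : Real.sin ((K+1)*θ)^2 + Real.sin (K*θ)^2
      - 2*c*Real.sin (K*θ)*Real.sin ((K+1)*θ) = Real.sin θ^2 := by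
    have h := ssq θ (K*θ)
    rw [show K*θ+θ = (K+1)*θ by ring] at h
    exact h
  have hn1 : -(-(Real.sin (K*θ)^2)/Real.sin θ^2)
      + 2*c*(-(Real.sin (K*θ) * Real.sin ((K+1)*θ))/Real.sin θ^2) - 1
      = -(Real.sin ((K+1)*θ)^2)/Real.sin θ^2 := by
    field_simp
    rw [show θ * (K + 1) = (K + 1) * θ by ring]
    linear_combination hsq
  rw [altElt_succ_left, lmul_apply, dyn2_even hA hB haa hbb hab hba hsin x0 h0a h0b k,
    stepA1 hA haa hab x0 h0a _ _, hn1]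

end Dyn

end TwoGen

section Graph

variable {V : Type*} [Fintype V] (G : SimpleGraph V) (μ : V → V → ℕ)

abbrev Esp (V : Type*) := (V → ℝ) × (V → ℝ)

open Classical in
noncomputable def Bmat (v w : V) : ℝ :=
  if v = w then 1 else if G.Adj v w then -Real.cos (Real.pi / μ v w) else 0

lemma Bmat_diag (v : V) : Bmat G μ v v = 1 := by simp [Bmat]

lemma Bmat_adj {v w : V} (h : G.Adj v w) :
    Bmat G μ v w = -Real.cos (Real.pi / μ v w) := by
  simp [Bmat, h, h.ne]

lemma Bmat_symm (hμsymm : ∀ s t : V, μ s t = μ t s) (v w : V) :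
    Bmat G μ v w = Bmat G μ w v := by
  unfold Bmat
  by_cases h : v = w
  · simp [h]
  · have h' : ¬ w = v := fun hh => h hh.symm
    simp only [if_neg h, if_neg h']
    by_cases ha : G.Adj v w
    · simp [ha, ha.symm, hμsymm v w]
    · have ha' : ¬ G.Adj w v := fun hh => ha hh.symm
      simp [ha, ha']

open Classical in
noncomputable def avec (v : V) : Esp V := (Pi.single v 1, 0)

noncomputable def ffun (v : V) : Esp V →ₗ[ℝ] ℝ where
  toFun x := (∑ u : V, 2 * Bmat G μ v u * x.1 u) + x.2 v
  map_add' x y := by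
    simp only [Prod.fst_add, Prod.snd_add, Pi.add_apply, mul_add]
    rw [Finset.sum_add_distrib]
    ring
  map_smul' c x := by
    simp only [Prod.smul_fst, Prod.smul_snd, Pi.smul_apply, smul_eq_mul, RingHom.id_apply]
    rw [mul_add, Finset.mul_sum]
    congr 1
    exact Finset.sum_congr rfl (fun u _ => by ring)

lemma ffun_apply (v : V) (x : Esp V) :
    ffun G μ v x = (∑ u : V, 2 * Bmat G μ v u * x.1 u) + x.2 v := rfl

open Classical in
lemma ffun_avec (v u : V) : ffun G μ v (avec u) = 2 * Bmat G μ v u := by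
  classical
  rw [ffun_apply]
  simp only [avec, Pi.single_apply]
  have hterm : ∀ w : V, (2:ℝ) * Bmat G μ v w * (if w = u then (1:ℝ) else 0)
      = (if w = u then 2 * Bmat G μ v w else 0) := fun w => by split <;> simp
  rw [Finset.sum_congr rfl (fun w _ => hterm w)]
  simp [Finset.sum_ite_eq']

end Graph

section Refl

variable {E : Type*} [AddCommGroup E] [Module ℝ E]

lemma lmul_apply' (f g : E ≃ₗ[ℝ] E) (x : E) : (f * g) x = f (g x) := rfl

noncomputable def sigmaL (f : E →ₗ[ℝ] ℝ) (v : E) (h : f v = 2) : E ≃ₗ[ℝ] E :=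
  LinearEquiv.ofLinear (LinearMap.id - f.smulRight v) (LinearMap.id - f.smulRight v)
    (by
      ext x
      simp only [LinearMap.comp_apply, LinearMap.sub_apply, LinearMap.id_apply,
        LinearMap.smulRight_apply, map_sub, map_smul, h, smul_eq_mul]
      module)
    (by
      ext x
      simp only [LinearMap.comp_apply, LinearMap.sub_apply, LinearMap.id_apply,
        LinearMap.smulRight_apply, map_sub, map_smul, h, smul_eq_mul]
      module)

lemma sigmaL_apply (f : E →ₗ[ℝ] ℝ) (v : E) (h : f v = 2) (x : E) :
    sigmaL f v h x = x - f x • v := rfl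

end Refl

lemma map_altElt {M N : Type*} [Monoid M] [Monoid N] (F : M →* N) (x y : M) (m : ℕ) :
    F (altElt x y m) = altElt (F x) (F y) m := by
  unfold altElt
  rw [map_list_prod, List.map_map]
  congr 1
  exact List.map_congr_left fun i _ => by by_cases h : i % 2 = 0 <;> simp [h]

section Graph2

variable {V : Type*} [Fintype V] (G : SimpleGraph V) (μ : V → V → ℕ)

lemma ffun_avec_self (v : V) : ffun G μ v (avec v) = 2 := by
  rw [ffun_avec, Bmat_diag]; norm_num

noncomputable def sigV (v : V) : Esp V ≃ₗ[ℝ] Esp V :=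
  sigmaL (ffun G μ v) (avec v) (ffun_avec_self G μ v)

lemma sigV_apply (v : V) (x : Esp V) :
    sigV G μ v x = x - ffun G μ v x • avec v := rfl

variable (hμsymm : ∀ s t : V, μ s t = μ t s) (hμ2 : ∀ s t : V, G.Adj s t → 2 ≤ μ s t)

include hμsymm hμ2 in
lemma rels_hold : ∀ r ∈ artinRels G μ,
    (FreeGroup.lift (fun v => sigV G μ v)) r = 1 := by
  rintro r ⟨s', t', hadj, rfl⟩
  rw [map_mul, map_inv, map_altElt, map_altElt, FreeGroup.lift_apply_of, FreeGroup.lift_apply_of,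
    mul_inv_eq_one]
  refine braid_rel (θ := Real.pi / (μ s' t' : ℝ))
    (fun x => rfl) (fun x => rfl)
    (ffun_avec_self G μ s') (ffun_avec_self G μ t') ?_ ?_ (μ s' t') (hμ2 s' t' hadj) rfl
  · rw [ffun_avec, Bmat_adj G μ hadj]; ring
  · rw [ffun_avec, Bmat_symm G μ hμsymm, Bmat_adj G μ hadj]; ring

noncomputable def phi : ArtinGroup G μ →* (Esp V ≃ₗ[ℝ] Esp V) :=
  PresentedGroup.toGroup (rels_hold G μ hμsymm hμ2)

lemma phi_of (v : V) : phi G μ hμsymm hμ2 (PresentedGroup.of v) = sigV G μ v :=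
  PresentedGroup.toGroup.of _


/-- Elements of the subgroup generated by reflections in `S` move vectors by
elements of the span of `avec '' S`. -/
lemma move_in_span (S : Set V) (P : Esp V ≃ₗ[ℝ] Esp V)
    (hP : P ∈ Subgroup.closure ((fun v => sigV G μ v) '' S)) :
    ∀ x : Esp V, P x - x ∈ Submodule.span ℝ ((fun v => avec v : V → Esp V) '' S) := by
  refine Subgroup.closure_induction ?_ ?_ ?_ ?_ hP
  · rintro P ⟨v, hv, rfl⟩ x
    rw [sigV_apply]
    rw [sub_sub_cancel_left]
    exact neg_mem (Submodule.smul_mem _ _ (Submodule.subset_span ⟨v, hv, rfl⟩))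
  · intro x
    rw [show (1 : Esp V ≃ₗ[ℝ] Esp V) x = x from rfl, sub_self]
    exact zero_mem _
  · intro P Q _ _ ihP ihQ x
    have h : (P * Q) x - x = (P (Q x) - Q x) + (Q x - x) := by
      rw [lmul_apply']; abel
    rw [h]
    exact add_mem (ihP _) (ihQ _)
  · intro P _ ihP x
    have h1 : P ((P⁻¹ : Esp V ≃ₗ[ℝ] Esp V) x) = x := P.apply_symm_apply x
    have h : (P⁻¹ : Esp V ≃ₗ[ℝ] Esp V) x - x
        = -(P ((P⁻¹ : Esp V ≃ₗ[ℝ] Esp V) x) - (P⁻¹ : Esp V ≃ₗ[ℝ] Esp V) x) := by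
      rw [h1]; abel
    rw [h]
    exact neg_mem (ihP _)

/-- Reflections in `S` fix a vector annihilated by the `S`-functionals. -/
lemma fix_vec (S : Set V) (x0 : Esp V) (h0 : ∀ v ∈ S, ffun G μ v x0 = 0)
    (P : Esp V ≃ₗ[ℝ] Esp V)
    (hP : P ∈ Subgroup.closure ((fun v => sigV G μ v) '' S)) : P x0 = x0 := by
  refine Subgroup.closure_induction ?_ ?_ ?_ ?_ hP
  · rintro P ⟨v, hv, rfl⟩
    rw [sigV_apply, h0 v hv, zero_smul, sub_zero]
  · rfl
  · intro P Q _ _ ihP ihQ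
    rw [lmul_apply', ihQ, ihP]
  · intro P _ ihP
    have := congrArg (⇑P.symm) ihP
    rw [LinearEquiv.symm_apply_apply] at this
    exact this.symm

noncomputable def omgf (v : V) : Esp V →ₗ[ℝ] ℝ :=
  (LinearMap.proj v).comp (LinearMap.fst ℝ (V → ℝ) (V → ℝ))

lemma omgf_apply (v : V) (x : Esp V) : omgf v x = x.1 v := rfl

open Classical in
noncomputable def xvec (t : V) : Esp V := ((0 : V → ℝ), Pi.single t 1)

open Classical in
lemma ffun_xvec (v t : V) : ffun G μ v (xvec t) = (Pi.single t 1 : V → ℝ) v := by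
  rw [ffun_apply]
  simp [xvec]

end Graph2

end ATL

end ATLaux

open ATL in
theorem artin_twist_lemma
    {V : Type*} [Fintype V] (G : SimpleGraph V) (μ : V → V → ℕ)
    (hμsymm : ∀ s t : V, μ s t = μ t s)
    (hμ2 : ∀ s t : V, G.Adj s t → 2 ≤ μ s t)
    (s t : V) (hadj : G.Adj s t) (hm : 2 < μ s t)
    (U : Set V) (hclique : ∀ u ∈ U, ∀ v ∈ U, u ≠ v → G.Adj u v)
    (hs : s ∈ U) (ht : t ∈ U)
    (τ : ArtinGroup G μ)
    (hτ : τ = altElt (PresentedGroup.of s : ArtinGroup G μ) (PresentedGroup.of t)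
      (if Odd (μ s t) then μ s t else μ s t + 1)) :
    (¬ ∃ g ∈ Subgroup.closure
        ((fun v => (PresentedGroup.of v : ArtinGroup G μ)) '' (U \ {s})),
        g⁻¹ * τ ∈ Subgroup.closure
          ((fun v => (PresentedGroup.of v : ArtinGroup G μ)) '' (U \ {t}))) ∧
      (¬ ∃ g ∈ Subgroup.closure
        ((fun v => (PresentedGroup.of v : ArtinGroup G μ)) '' (U \ {t})),
        g⁻¹ * τ ∈ Subgroup.closure
          ((fun v => (PresentedGroup.of v : ArtinGroup G μ)) '' (U \ {s}))) := by
  classical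
  have hst : s ≠ t := hadj.ne
  set m := μ s t with hmdef
  set L := if Odd m then m else m + 1 with hLdef
  obtain ⟨k, hLk, hk1, hkm⟩ : ∃ k : ℕ, L = 2*k+1 ∧ 1 ≤ k ∧ k + 1 < m := by
    by_cases hodd : Odd m
    · obtain ⟨j, hj⟩ := hodd
      refine ⟨j, ?_, by omega, by omega⟩
      rw [hLdef, if_pos ⟨j, hj⟩]; omega
    · obtain ⟨j, hj⟩ := Nat.not_odd_iff_even.mp hodd
      refine ⟨j, ?_, by omega, by omega⟩
      rw [hLdef, if_neg hodd]; omega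
  set θ := Real.pi / (m : ℝ) with hθdef
  have hm0 : 0 < m := by omega
  have hmR : (0:ℝ) < (m:ℝ) := by exact_mod_cast hm0
  have hθpos : 0 < θ := by rw [hθdef]; positivity
  have hθlt : θ < Real.pi := by
    rw [hθdef]
    calc Real.pi / (m:ℝ) ≤ Real.pi / 2 := by
          apply div_le_div_of_nonneg_left Real.pi_pos.le (by norm_num)
          exact_mod_cast (by omega : 2 ≤ m)
      _ < Real.pi := by linarith [Real.pi_pos]
  have hsin : Real.sin θ ≠ 0 := ne_of_gt (Real.sin_pos_of_pos_of_lt_pi hθpos hθlt)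
  have hlt : ∀ j : ℕ, 1 ≤ j → j < m → 0 < Real.sin ((j:ℝ)*θ) := by
    intro j hj1 hjm
    apply Real.sin_pos_of_pos_of_lt_pi
    · have : (0:ℝ) < (j:ℝ) := by exact_mod_cast hj1
      positivity
    · have hjR : (j:ℝ) < (m:ℝ) := by exact_mod_cast hjm
      calc (j:ℝ) * θ < (m:ℝ) * θ := by
            apply mul_lt_mul_of_pos_right hjR hθpos
        _ = Real.pi := by rw [hθdef]; field_simp
  have hsinK : 0 < Real.sin ((k:ℝ)*θ) := hlt k hk1 (by omega)
  have hsinK1 : 0 < Real.sin (((k:ℝ)+1)*θ) := by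
    have := hlt (k+1) (by omega) hkm
    rwa [Nat.cast_add, Nat.cast_one] at this
  -- the representation
  set φ := ATL.phi G μ hμsymm hμ2 with hφdef
  have hφτ : φ τ = altElt (ATL.sigV G μ s) (ATL.sigV G μ t) L := by
    rw [hτ, ATL.map_altElt φ, hφdef, ATL.phi_of, ATL.phi_of]
  -- common data for the two-generator dynamics
  have hA : ∀ x, ATL.sigV G μ s x = x - ATL.ffun G μ s x • ATL.avec s := fun _ => rfl
  have hB : ∀ x, ATL.sigV G μ t x = x - ATL.ffun G μ t x • ATL.avec t := fun _ => rfl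
  have haa : ATL.ffun G μ s (ATL.avec s) = 2 := ATL.ffun_avec_self G μ s
  have hbb : ATL.ffun G μ t (ATL.avec t) = 2 := ATL.ffun_avec_self G μ t
  have hab : ATL.ffun G μ s (ATL.avec t) = -(2 * Real.cos θ) := by
    rw [ATL.ffun_avec, ATL.Bmat_adj G μ hadj, ← hmdef, ← hθdef]; ring
  have hba : ATL.ffun G μ t (ATL.avec s) = -(2 * Real.cos θ) := by
    rw [ATL.ffun_avec, ATL.Bmat_symm G μ hμsymm, ATL.Bmat_adj G μ hadj, ← hmdef, ← hθdef]
    ring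
  have hxvt_s : ATL.ffun G μ s (ATL.xvec t) = 0 := by
    rw [ATL.ffun_xvec]; simp [Pi.single_apply, hst]
  have hxvt_t : ATL.ffun G μ t (ATL.xvec t) = 1 := by
    rw [ATL.ffun_xvec]; simp
  have hxvs_s : ATL.ffun G μ s (ATL.xvec s) = 1 := by
    rw [ATL.ffun_xvec]; simp
  have hxvs_t : ATL.ffun G μ t (ATL.xvec s) = 0 := by
    rw [ATL.ffun_xvec]; simp [Pi.single_apply, Ne.symm hst]
  have hposq : 0 < (Real.sin ((k:ℝ)*θ) * Real.sin (((k:ℝ)+1)*θ))/(Real.sin θ)^2 := by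
    apply div_pos (mul_pos hsinK hsinK1)
    have := Real.sin_pos_of_pos_of_lt_pi hθpos hθlt
    positivity
  have himg : ∀ S : Set V, (⇑φ) '' ((fun v => (PresentedGroup.of v : ArtinGroup G μ)) '' S)
      = (fun v => ATL.sigV G μ v) '' S := by
    intro S
    rw [Set.image_image]
    exact Set.image_congr fun v _ => by rw [hφdef]; exact ATL.phi_of G μ hμsymm hμ2 v
  constructor
  · rintro ⟨g, hg, hh⟩
    have hτgh : τ = g * (g⁻¹ * τ) := by group
    have hφg : φ g ∈ Subgroup.closure ((fun v => ATL.sigV G μ v) '' (U \ {s})) := by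
      have h1 := Subgroup.mem_map_of_mem φ hg
      rwa [MonoidHom.map_closure, himg] at h1
    have hφh : φ (g⁻¹ * τ) ∈ Subgroup.closure ((fun v => ATL.sigV G μ v) '' (U \ {t})) := by
      have h1 := Subgroup.mem_map_of_mem φ hh
      rwa [MonoidHom.map_closure, himg] at h1
    have hfix : φ (g⁻¹ * τ) (ATL.xvec t) = ATL.xvec t := by
      refine ATL.fix_vec G μ (U \ {t}) _ (fun v hv => ?_) _ hφh
      rw [ATL.ffun_xvec]
      have hvt : v ≠ t := fun h => hv.2 h
      simp [Pi.single_apply, hvt]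
    have hmove := ATL.move_in_span G μ (U \ {s}) (φ g) hφg (ATL.xvec t)
    have hker : Submodule.span ℝ ((fun v => ATL.avec v : V → ATL.Esp V) '' (U \ {s}))
        ≤ LinearMap.ker (ATL.omgf s) := by
      rw [Submodule.span_le]
      rintro _ ⟨v, hv, rfl⟩
      rw [SetLike.mem_coe, LinearMap.mem_ker, ATL.omgf_apply]
      have hvs : v ≠ s := fun h => hv.2 h
      simp [ATL.avec, Pi.single_apply, hvs]
    have e1 : ATL.omgf s (φ τ (ATL.xvec t)) = 0 := by
      rw [hτgh, map_mul, ATL.lmul_apply', hfix]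
      have hsplit : φ g (ATL.xvec t)
          = (φ g (ATL.xvec t) - ATL.xvec t) + ATL.xvec t := by abel
      rw [hsplit, map_add, hker hmove]
      rw [ATL.omgf_apply]
      simp [ATL.xvec]
    have e2 : ATL.omgf s (φ τ (ATL.xvec t))
        = -(Real.sin ((k:ℝ)*θ) * Real.sin (((k:ℝ)+1)*θ))/(Real.sin θ)^2 := by
      rw [hφτ, hLk,
        ATL.dyn1_odd hA hB haa hbb hab hba hsin (ATL.xvec t) hxvt_s hxvt_t k,
        map_add, map_add, map_smul, map_smul, ATL.omgf_apply, ATL.omgf_apply,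
        ATL.omgf_apply]
      have h1 : (ATL.xvec t : ATL.Esp V).1 s = 0 := rfl
      have h2 : (ATL.avec s : ATL.Esp V).1 s = 1 := by simp [ATL.avec]
      have h3 : (ATL.avec t : ATL.Esp V).1 s = 0 := by simp [ATL.avec, Pi.single_apply, hst]
      rw [h1, h2, h3]
      simp [smul_eq_mul]
    rw [e1] at e2
    have := hposq
    rw [neg_div] at e2
    linarith
  · rintro ⟨g, hg, hh⟩
    have hτgh : τ = g * (g⁻¹ * τ) := by group
    have hφg : φ g ∈ Subgroup.closure ((fun v => ATL.sigV G μ v) '' (U \ {t})) := by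
      have h1 := Subgroup.mem_map_of_mem φ hg
      rwa [MonoidHom.map_closure, himg] at h1
    have hφh : φ (g⁻¹ * τ) ∈ Subgroup.closure ((fun v => ATL.sigV G μ v) '' (U \ {s})) := by
      have h1 := Subgroup.mem_map_of_mem φ hh
      rwa [MonoidHom.map_closure, himg] at h1
    have hfix : φ (g⁻¹ * τ) (ATL.xvec s) = ATL.xvec s := by
      refine ATL.fix_vec G μ (U \ {s}) _ (fun v hv => ?_) _ hφh
      rw [ATL.ffun_xvec]
      have hvs : v ≠ s := fun h => hv.2 h
      simp [Pi.single_apply, hvs]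
    have hmove := ATL.move_in_span G μ (U \ {t}) (φ g) hφg (ATL.xvec s)
    have hker : Submodule.span ℝ ((fun v => ATL.avec v : V → ATL.Esp V) '' (U \ {t}))
        ≤ LinearMap.ker (ATL.omgf t) := by
      rw [Submodule.span_le]
      rintro _ ⟨v, hv, rfl⟩
      rw [SetLike.mem_coe, LinearMap.mem_ker, ATL.omgf_apply]
      have hvt : v ≠ t := fun h => hv.2 h
      simp [ATL.avec, Pi.single_apply, hvt]
    have e1 : ATL.omgf t (φ τ (ATL.xvec s)) = 0 := by
      rw [hτgh, map_mul, ATL.lmul_apply', hfix]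
      have hsplit : φ g (ATL.xvec s)
          = (φ g (ATL.xvec s) - ATL.xvec s) + ATL.xvec s := by abel
      rw [hsplit, map_add, hker hmove]
      rw [ATL.omgf_apply]
      simp [ATL.xvec]
    have e2 : ATL.omgf t (φ τ (ATL.xvec s))
        = -(Real.sin ((k:ℝ)*θ) * Real.sin (((k:ℝ)+1)*θ))/(Real.sin θ)^2 := by
      rw [hφτ, hLk,
        ATL.dyn2_odd hA hB haa hbb hab hba hsin (ATL.xvec s) hxvs_s hxvs_t k,
        map_add, map_add, map_smul, map_smul, ATL.omgf_apply, ATL.omgf_apply,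
        ATL.omgf_apply]
      have h1 : (ATL.xvec s : ATL.Esp V).1 t = 0 := rfl
      have h2 : (ATL.avec s : ATL.Esp V).1 t = 0 := by
        simp [ATL.avec, Pi.single_apply, Ne.symm hst]
      have h3 : (ATL.avec t : ATL.Esp V).1 t = 1 := by simp [ATL.avec]
      rw [h1, h2, h3]
      simp [smul_eq_mul]
    rw [e1] at e2
    have := hposq
    rw [neg_div] at e2
    linarith
end

section
/- Let k ≥ 1 and let G₁, …, G_k be connected finite simple graphs, each having at least two vertices. Let T be a tree with vertex set {1, …, k}, and for each edge {i, j} of T with i < j, let s_{i,j} be a chosen vertex of G_i and t_{i,j} a chosen vertex of G_j. Then there exists a positive integer n and, for each i ∈ {1, …, k}, a closed walk (v_{i,1}, …, v_{i,n}, v_{i,n+1}) in G_i with v_{i,1} = v_{i,n+1} that passes through every vertex of G_i at least once, such that for every edge {i, j} of T with i < j there exists an index l ∈ {1, …, n} with v_{i,l} = s_{i,j} and v_{j,l} = t_{i,j}. -/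
namespace SyncWalks

variable {V : Type*} {G : SimpleGraph V}

/-- Glue two adjacency-respecting functions. -/
lemma glueTrip {m m' : ℕ} {f1 f2 : ℕ → V}
    (h1 : ∀ l < m, G.Adj (f1 l) (f1 (l + 1)))
    (h2 : ∀ l < m', G.Adj (f2 l) (f2 (l + 1)))
    (hj : f1 m = f2 0) :
    ∃ f : ℕ → V, (∀ l ≤ m, f l = f1 l) ∧ (∀ l, m ≤ l → f l = f2 (l - m)) ∧
      ∀ l < m + m', G.Adj (f l) (f (l + 1)) := by
  refine ⟨fun l => if l < m then f1 l else f2 (l - m), ?_, ?_, ?_⟩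
  · intro l hl
    by_cases h : l < m
    · simp [h]
    · have hlm : l = m := by omega
      simp [hlm, hj.symm]
  · intro l hl
    simp [Nat.not_lt.mpr hl]
  · intro l hl
    dsimp only
    by_cases h : l + 1 ≤ m
    · have hlm : l < m := by omega
      rw [if_pos hlm]
      by_cases h2' : l + 1 < m
      · rw [if_pos h2']; exact h1 l hlm
      · have he : l + 1 = m := by omega
        rw [if_neg (by omega), show l + 1 - m = 0 by omega, ← hj, ← he]
        exact h1 l hlm
    · rw [if_neg (by omega), if_neg (by omega), show l + 1 - m = (l - m) + 1 by omega]
      exact h2 (l - m) (by omega)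

lemma trip_of_walk {u w : V} (p : G.Walk u w) :
    ∃ f : ℕ → V, f 0 = u ∧ f p.length = w ∧ ∀ l < p.length, G.Adj (f l) (f (l + 1)) :=
  ⟨p.getVert, p.getVert_zero, p.getVert_length, fun l hl => p.adj_getVert_succ hl⟩

lemma trip_dist (hconn : G.Connected) (u w : V) :
    ∃ f : ℕ → V, f 0 = u ∧ f (G.dist u w) = w ∧
      ∀ l < G.dist u w, G.Adj (f l) (f (l + 1)) := by
  obtain ⟨p, hp⟩ := hconn.exists_walk_length_eq_dist u w
  obtain ⟨f, h0, h1, h2⟩ := trip_of_walk p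
  exact ⟨f, h0, by rwa [hp] at h1, by rw [← hp]; exact h2⟩

lemma dist_lt_card [Fintype V] (hconn : G.Connected) (u w : V) :
    G.dist u w < Fintype.card V := by
  obtain ⟨p, hp, hl⟩ := (hconn u w).exists_path_of_dist
  rw [← hl]
  exact hp.length_lt

lemma trip_pad {r b : V} (h : G.Adj r b) :
    ∀ a : ℕ, ∃ f : ℕ → V, f 0 = r ∧ f (2 * a) = r ∧ ∀ l < 2 * a, G.Adj (f l) (f (l + 1)) := by
  intro a
  induction a with
  | zero => exact ⟨fun _ => r, rfl, rfl, by omega⟩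
  | succ a ih =>
    obtain ⟨f2, h0, h1, h2⟩ := ih
    have hstep : ∀ l < 2, G.Adj ((fun l => if l = 1 then b else r) l)
        ((fun l => if l = 1 then b else r) (l + 1)) := by
      intro l hl
      interval_cases l
      · simpa using h
      · simpa using h.symm
    obtain ⟨f, hf1, hf2, hf3⟩ := glueTrip (m := 2) (m' := 2 * a) hstep h2 (by simpa using h0.symm)
    have h2a : 2 * (a + 1) = 2 + 2 * a := by ring
    refine ⟨f, by rw [hf1 0 (by omega)]; simp, ?_, by rw [h2a]; exact hf3⟩
    rw [h2a, hf2 (2 + 2 * a) (by omega), show 2 + 2 * a - 2 = 2 * a by omega]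
    exact h1

end SyncWalks
section Part2
namespace SyncWalks

variable {V : Type*} {G : SimpleGraph V}

lemma tour (hconn : G.Connected) (r : V) [Fintype V] :
    ∀ xs : List V, ∃ M, ∃ f : ℕ → V, M % 2 = 0 ∧ M ≤ 2 * Fintype.card V * xs.length ∧
      f 0 = r ∧ f M = r ∧ (∀ l < M, G.Adj (f l) (f (l + 1))) ∧
      ∀ x ∈ xs, ∃ l ≤ M, f l = x := by
  intro xs
  induction xs with
  | nil => exact ⟨0, fun _ => r, rfl, by simp, rfl, rfl, by omega, by simp⟩
  | cons x xs ih =>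
    obtain ⟨M, f3, hM2, hMle, h30, h31, h32, h33⟩ := ih
    obtain ⟨f1, h10, h11, h12⟩ := trip_dist hconn r x
    obtain ⟨f2, h20, h21, h22⟩ := trip_dist hconn x r
    set d1 := G.dist r x with hd1
    set d2 := G.dist x r with hd2
    have hd12 : d2 = d1 := SimpleGraph.dist_comm ..
    -- glue f2 and f3
    obtain ⟨g, hg1, hg2, hg3⟩ := glueTrip (m := d2) (m' := M) h22 h32 (h21.trans h30.symm)
    -- glue f1 and g
    obtain ⟨f, hf1, hf2, hf3⟩ := glueTrip (m := d1) (m' := d2 + M) h12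
      (by rw [show d2 + M = d2 + M from rfl]; exact fun l hl => hg3 l (by omega))
      (by rw [h11, hg1 0 (by omega), h20])
    have hdlt : d1 < Fintype.card V := dist_lt_card hconn r x
    refine ⟨d1 + (d2 + M), f, by omega, by simp [List.length_cons]; nlinarith, ?_, ?_, hf3, ?_⟩
    · rw [hf1 0 (by omega), h10]
    · rw [hf2 _ (by omega), show d1 + (d2 + M) - d1 = d2 + M from by omega,
        hg2 _ (by omega), show d2 + M - d2 = M from by omega, h31]
    · intro y hy
      rcases List.mem_cons.mp hy with hy | hy
      · refine ⟨d1, by omega, ?_⟩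
        rw [hf1 d1 le_rfl, h11, hy]
      · obtain ⟨l, hl, hfl⟩ := h33 y hy
        refine ⟨d1 + (d2 + l), by omega, ?_⟩
        rw [hf2 _ (by omega), show d1 + (d2 + l) - d1 = d2 + l from by omega,
          hg2 _ (by omega), show d2 + l - d2 = l from by omega, hfl]

lemma cover (hconn : G.Connected) (r : V) [Fintype V] :
    ∃ M, ∃ f : ℕ → V, M % 2 = 0 ∧ M ≤ 2 * Fintype.card V * Fintype.card V ∧
      f 0 = r ∧ f M = r ∧ (∀ l < M, G.Adj (f l) (f (l + 1))) ∧
      ∀ x : V, ∃ l ≤ M, f l = x := by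
  obtain ⟨M, f, h1, h2, h3, h4, h5, h6⟩ := tour hconn r Finset.univ.toList
  rw [Finset.length_toList, Finset.card_univ] at h2
  exact ⟨M, f, h1, h2, h3, h4, h5, fun x => h6 x (by simp [Finset.mem_toList])⟩

/-- Flexible covering segment: any long enough length of the right parity. -/
lemma flex [Fintype V] (hconn : G.Connected) {r b : V} (hrb : G.Adj r b) (u w : V) (m : ℕ)
    (hm : 2 * Fintype.card V * Fintype.card V + 2 * Fintype.card V + 2 ≤ m)
    (hpar : m % 2 = (G.dist r u + G.dist r w) % 2) :
    ∃ f : ℕ → V, f 0 = u ∧ f m = w ∧ (∀ l < m, G.Adj (f l) (f (l + 1))) ∧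
      ∀ x : V, ∃ l ≤ m, f l = x := by
  classical
  obtain ⟨f1, h10, h11, h12⟩ := trip_dist hconn u r
  obtain ⟨M, fM, hM2, hMle, hM0, hM1, hMadj, hMcov⟩ := cover hconn r
  obtain ⟨f4, h40, h41, h42⟩ := trip_dist hconn r w
  set d1 := G.dist u r with hd1
  set d2 := G.dist r w with hd2
  have hd1' : d1 = G.dist r u := SimpleGraph.dist_comm ..
  have hd1lt : d1 < Fintype.card V := dist_lt_card hconn u r
  have hd2lt : d2 < Fintype.card V := dist_lt_card hconn r w
  have hrest : d1 + M + d2 + 2 ≤ m := by omega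
  set a := (m - (d1 + M + d2)) / 2 with ha
  have hsplit : m = d1 + (M + (2 * a + d2)) := by omega
  obtain ⟨f3, h30, h31, h32⟩ := trip_pad hrb a
  -- glue pad and f4 : from r, length 2a + d2
  obtain ⟨g2, hg20, hg21, hg22⟩ := glueTrip (m := 2 * a) (m' := d2) h32 h42
    (h31.trans h40.symm)
  -- glue cover and g2 : from r, length M + (2a + d2)
  obtain ⟨g1, hg10, hg11, hg12⟩ := glueTrip (m := M) (m' := 2 * a + d2) hMadj hg22
    (by rw [hM1, hg20 0 (by omega), h30])
  -- glue f1 and g1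
  obtain ⟨f, hf1, hf2, hf3⟩ := glueTrip (m := d1) (m' := M + (2 * a + d2)) h12 hg12
    (by rw [h11, hg10 0 (by omega), hM0])
  refine ⟨f, by rw [hf1 0 (by omega), h10], ?_, by rw [hsplit]; exact hf3, ?_⟩
  · rw [hsplit, hf2 _ (by omega), show d1 + (M + (2 * a + d2)) - d1 = M + (2 * a + d2) by omega,
      hg11 _ (by omega), show M + (2 * a + d2) - M = 2 * a + d2 by omega,
      hg21 _ (by omega), show 2 * a + d2 - 2 * a = d2 by omega, h41]
  · intro x
    obtain ⟨l, hl, hfl⟩ := hMcov x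
    refine ⟨d1 + l, by omega, ?_⟩
    rw [hf2 _ (by omega), show d1 + l - d1 = l by omega]
    rcases Nat.lt_or_ge l M with h | h
    · rw [hg10 l (by omega), hfl]
    · have hlM : l = M := by omega
      rw [hg10 l (by omega), hfl]

end SyncWalks
end Part2
section Part3
namespace SyncWalks

variable {V : Type*} {G : SimpleGraph V}

lemma build [Fintype V] (hconn : G.Connected) {r b : V} (hrb : G.Adj r b) :
    ∀ (L : List (ℕ × V)) (u w : V) (n : ℕ),
    L.Pairwise (fun p q => p.1 + (2 * Fintype.card V * Fintype.card V
        + 2 * Fintype.card V + 2) ≤ q.1) →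
    (∀ p ∈ L, (2 * Fintype.card V * Fintype.card V + 2 * Fintype.card V + 2) ≤ p.1 ∧
      p.1 + (2 * Fintype.card V * Fintype.card V + 2 * Fintype.card V + 2) ≤ n ∧
      p.1 % 2 = (G.dist r u + G.dist r p.2) % 2) →
    (2 * Fintype.card V * Fintype.card V + 2 * Fintype.card V + 2) ≤ n →
    n % 2 = (G.dist r u + G.dist r w) % 2 →
    ∃ f : ℕ → V, f 0 = u ∧ f n = w ∧ (∀ l < n, G.Adj (f l) (f (l + 1))) ∧
      (∀ x : V, ∃ l ≤ n, f l = x) ∧ ∀ p ∈ L, f p.1 = p.2 := by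
  set D := 2 * Fintype.card V * Fintype.card V + 2 * Fintype.card V + 2 with hD
  suffices H : ∀ N (L : List (ℕ × V)), L.length ≤ N → ∀ u w n,
      L.Pairwise (fun p q => p.1 + D ≤ q.1) →
      (∀ p ∈ L, D ≤ p.1 ∧ p.1 + D ≤ n ∧ p.1 % 2 = (G.dist r u + G.dist r p.2) % 2) →
      D ≤ n → n % 2 = (G.dist r u + G.dist r w) % 2 →
      ∃ f : ℕ → V, f 0 = u ∧ f n = w ∧ (∀ l < n, G.Adj (f l) (f (l + 1))) ∧
        (∀ x : V, ∃ l ≤ n, f l = x) ∧ ∀ p ∈ L, f p.1 = p.2 by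
    exact fun L => H L.length L le_rfl
  intro N
  induction N with
  | zero =>
    intro L hL u w n _ _ hn hpar
    rw [Nat.le_zero, List.length_eq_zero_iff] at hL
    subst hL
    obtain ⟨f, h0, h1, h2, h3⟩ := flex hconn hrb u w n hn hpar
    exact ⟨f, h0, h1, h2, h3, by simp⟩
  | succ N ih =>
    intro L hL u w n hpw hmem hn hpar
    match L, hL, hpw, hmem with
    | [], _, _, _ =>
      obtain ⟨f, h0, h1, h2, h3⟩ := flex hconn hrb u w n hn hpar
      exact ⟨f, h0, h1, h2, h3, by simp⟩
    | (l, x) :: L, hL, hpw, hmem =>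
      obtain ⟨hDl', hln', hlpar'⟩ := hmem (l, x) (by simp)
      have hDl : D ≤ l := hDl'
      have hln : l + D ≤ n := hln'
      have hlpar : l % 2 = (G.dist r u + G.dist r x) % 2 := hlpar'
      have hall : ∀ q ∈ L, l + D ≤ q.1 := fun q hq => (List.pairwise_cons.mp hpw).1 q hq
      obtain ⟨f1, h10, h11, h12, h13⟩ := flex hconn hrb u x l hDl hlpar
      have hpwtail := (List.pairwise_cons.mp hpw).2
      have hpw' : (L.map (fun q : ℕ × V => (q.1 - l, q.2))).Pairwise
          (fun p q => p.1 + D ≤ q.1) := by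
        rw [List.pairwise_map]
        exact hpwtail.imp_of_mem (fun {p q} hp _ h => by
          have := hall p hp
          show p.1 - l + D ≤ q.1 - l
          omega)
      have hmem' : ∀ q ∈ L.map (fun q : ℕ × V => (q.1 - l, q.2)), D ≤ q.1 ∧ q.1 + D ≤ n - l ∧
          q.1 % 2 = (G.dist r x + G.dist r q.2) % 2 := by
        intro q hq
        obtain ⟨p, hp, rfl⟩ := List.mem_map.mp hq
        obtain ⟨h1, h2, h3⟩ := hmem p (by simp [hp])
        have h4 := hall p hp
        refine ⟨by omega, by omega, ?_⟩
        show (p.1 - l) % 2 = (G.dist r x + G.dist r p.2) % 2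
        omega
      obtain ⟨f2, h20, h21, h22, h23, h24⟩ := ih (L.map (fun q : ℕ × V => (q.1 - l, q.2)))
        (by simpa using Nat.le_of_succ_le_succ hL) x w (n - l) hpw' hmem' (by omega) (by omega)
      obtain ⟨f, hf1, hf2, hf3⟩ := glueTrip (m := l) (m' := n - l) h12 h22
        (h11.trans h20.symm)
      have hsum : l + (n - l) = n := by omega
      rw [hsum] at hf3
      refine ⟨f, by rw [hf1 0 (by omega), h10], ?_, hf3, ?_, ?_⟩
      · rw [hf2 n (by omega)]; exact h21
      · intro y
        obtain ⟨l', hl', hfl⟩ := h13 y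
        exact ⟨l', by omega, by rw [hf1 l' hl']; exact hfl⟩
      · intro q hq
        rcases List.mem_cons.mp hq with hq | hq
        · rw [hq, hf1 l le_rfl]; exact h11
        · have h4 := hall q hq
          rw [hf2 q.1 (by omega)]
          exact h24 (q.1 - l, q.2) (List.mem_map.mpr ⟨q, hq, rfl⟩)
end SyncWalks
end Part3
section Part4
namespace SyncWalks

variable {k : ℕ} {T : SimpleGraph (Fin k)}

/-- Sum of an edge weighting along a walk. -/
def wsum (c : Fin k → Fin k → ZMod 2) : ∀ {u v : Fin k}, T.Walk u v → ZMod 2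
  | _, _, SimpleGraph.Walk.nil => 0
  | _, _, SimpleGraph.Walk.cons (u := a) (v := bb) _ p => c a bb + wsum c p

@[simp] lemma wsum_nil (c : Fin k → Fin k → ZMod 2) {u : Fin k} :
    wsum c (SimpleGraph.Walk.nil : T.Walk u u) = 0 := rfl

@[simp] lemma wsum_cons (c : Fin k → Fin k → ZMod 2) {u v w : Fin k} (h : T.Adj u v)
    (p : T.Walk v w) : wsum c (SimpleGraph.Walk.cons h p) = c u v + wsum c p := rfl

lemma wsum_append (c : Fin k → Fin k → ZMod 2) {u v w : Fin k} (p : T.Walk u v)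
    (q : T.Walk v w) : wsum c (p.append q) = wsum c p + wsum c q := by
  induction p with
  | nil => simp
  | cons h p ih => simp [SimpleGraph.Walk.cons_append, ih, add_assoc]

lemma wsum_reverse (c : Fin k → Fin k → ZMod 2) (hsym : ∀ i j, c i j = c j i)
    {u v : Fin k} (p : T.Walk u v) : wsum c p.reverse = wsum c p := by
  induction p with
  | nil => simp
  | cons h p ih =>
    rw [SimpleGraph.Walk.reverse_cons, wsum_append, ih]
    simp [hsym, add_comm]

lemma tree_potential (hT : T.IsTree) (i₀ : Fin k) (c : Fin k → Fin k → ZMod 2)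
    (hsym : ∀ i j, c i j = c j i) :
    ∃ ψ : Fin k → ZMod 2, ∀ i j, T.Adj i j → ψ i + ψ j = c i j := by
  classical
  have hpath : ∀ i : Fin k, ∃ p : T.Walk i₀ i, p.IsPath := by
    intro i
    obtain ⟨p⟩ := hT.isConnected.preconnected i₀ i
    exact ⟨p.bypass, p.bypass_isPath⟩
  choose P hP using hpath
  refine ⟨fun i => wsum c (P i), ?_⟩
  intro i j hadj
  have hij : i ≠ j := hadj.ne
  by_cases hjs : j ∈ (P i).support
  · -- the path to i passes through j; unique path forces last edge
    have hQ : ((P i).takeUntil j hjs).IsPath := (hP i).takeUntil hjs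
    have hR : ((P i).dropUntil j hjs).IsPath := (hP i).dropUntil hjs
    have hE : (SimpleGraph.Walk.cons (hadj.symm) SimpleGraph.Walk.nil : T.Walk j i).IsPath := by
      simp [SimpleGraph.Walk.cons_isPath_iff, hij.symm]
    have hRE : (P i).dropUntil j hjs = SimpleGraph.Walk.cons (hadj.symm) SimpleGraph.Walk.nil := by
      have := hT.IsAcyclic.path_unique ⟨(P i).dropUntil j hjs, hR⟩ ⟨_, hE⟩
      exact congrArg Subtype.val this
    have hQP : (P i).takeUntil j hjs = P j := by
      have := hT.IsAcyclic.path_unique ⟨(P i).takeUntil j hjs, hQ⟩ ⟨P j, hP j⟩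
      exact congrArg Subtype.val this
    have hsplit := (P i).take_spec hjs
    have heq : wsum c (P i) = wsum c (P j) + c j i := by
      rw [← hsplit, wsum_append, hQP, hRE]
      simp
    show wsum c (P i) + wsum c (P j) = c i j
    rw [heq, hsym j i]
    have h2 : ∀ x y : ZMod 2, y + x + y = x := by decide
    exact h2 _ _
  · -- extend the path to i by the edge i-j
    set Pj' : T.Walk i₀ j :=
      (SimpleGraph.Walk.cons hadj.symm (P i).reverse).reverse with hPj'
    have hPjpath : Pj'.IsPath := by
      rw [hPj', SimpleGraph.Walk.isPath_reverse_iff, SimpleGraph.Walk.cons_isPath_iff]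
      constructor
      · rw [SimpleGraph.Walk.isPath_reverse_iff]; exact hP i
      · rw [SimpleGraph.Walk.support_reverse, List.mem_reverse]; exact hjs
    have hQP : Pj' = P j := by
      have := hT.IsAcyclic.path_unique ⟨Pj', hPjpath⟩ ⟨P j, hP j⟩
      exact congrArg Subtype.val this
    have heq : wsum c (P j) = c j i + wsum c (P i) := by
      rw [← hQP, hPj', wsum_reverse c hsym, wsum_cons, wsum_reverse c hsym]
    show wsum c (P i) + wsum c (P j) = c i j
    rw [heq, hsym j i]
    have h2 : ∀ x y : ZMod 2, x + (y + x) = y := by decide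
    exact h2 _ _
end SyncWalks
end Part4
section Part5
namespace SyncWalks

lemma encode_inj {k a b a' b' : ℕ} (hk : 0 < k) (hb : b < k) (hb' : b' < k)
    (h : k * a + b = k * a' + b') : a = a' ∧ b = b' := by
  have h1 : (k * a + b) / k = a + b / k := Nat.mul_add_div hk a b
  have h2 : (k * a' + b') / k = a' + b' / k := Nat.mul_add_div hk a' b'
  rw [Nat.div_eq_of_lt hb] at h1
  rw [Nat.div_eq_of_lt hb'] at h2
  have ha : a = a' := by rw [h] at h1; omega
  subst ha
  exact ⟨rfl, by omega⟩

lemma minmax_cases {k : ℕ} (i j : Fin k) :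
    (min i j = i ∧ max i j = j) ∨ (min i j = j ∧ max i j = i) := by
  rcases le_total i j with h | h
  · left; exact ⟨min_eq_left h, max_eq_right h⟩
  · right; exact ⟨min_eq_right h, max_eq_left h⟩

end SyncWalks
end Part5

theorem exists_synchronized_closed_walks (k : ℕ) (hk : 1 ≤ k)
    (W : Fin k → Type*) [∀ i, Fintype (W i)]
    (G : (i : Fin k) → SimpleGraph (W i))
    (hconn : ∀ i, (G i).Connected)
    (htwo : ∀ i, ∃ v w : W i, v ≠ w)
    (T : SimpleGraph (Fin k)) (hT : T.IsTree)
    (s : (i : Fin k) → (j : Fin k) → W i)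
    (t : (i : Fin k) → (j : Fin k) → W j) :
    ∃ n : ℕ, 0 < n ∧ ∃ v : (i : Fin k) → ℕ → W i,
      (∀ i, v i n = v i 0) ∧
      (∀ i, ∀ l < n, (G i).Adj (v i l) (v i (l + 1))) ∧
      (∀ i, ∀ w : W i, ∃ l < n, v i l = w) ∧
      (∀ i j : Fin k, i < j → T.Adj i j → ∃ l < n, v i l = s i j ∧ v j l = t i j) := by
  classical
  -- global constants
  set C := ∑ i, Fintype.card (W i) with hC
  have hcard : ∀ i, Fintype.card (W i) ≤ C := fun i =>
    Finset.single_le_sum (f := fun i => Fintype.card (W i)) (fun _ _ => Nat.zero_le _)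
      (Finset.mem_univ i)
  set B := 2 * C * C + 2 * C + 4 with hB
  obtain ⟨m0, hm0⟩ : ∃ m0, B = 2 * m0 := ⟨C * C + C + 2, by rw [hB]; ring⟩
  set n := B * (k * k + 2) with hn
  have hkk : 1 ≤ k * k := Nat.one_le_iff_ne_zero.mpr (by positivity)
  have hBpos : 0 < B := by omega
  have hnpos : 0 < n := by positivity
  have hn2 : n % 2 = 0 := by
    have : n = 2 * (m0 * (k * k + 2)) := by rw [hn, hm0]; ring
    omega
  -- basepoints with an incident edge
  have hr : ∀ i, ∃ rr bb : W i, (G i).Adj rr bb := by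
    intro i
    obtain ⟨v, w, hvw⟩ := htwo i
    obtain ⟨p⟩ := (hconn i).preconnected v w
    cases p with
    | nil => exact absurd rfl hvw
    | cons h _ => exact ⟨_, _, h⟩
  choose r bv hrb using hr
  -- targets of the rendezvous as seen from each side
  let tgt : (i j : Fin k) → W i := fun i j => if i < j then s i j else t j i
  have htgt_lt : ∀ i j, i < j → tgt i j = s i j := fun i j h => if_pos h
  have htgt_ge : ∀ i j, ¬i < j → tgt i j = t j i := fun i j h => if_neg h
  -- parity potential on the tree
  let cZ : Fin k → Fin k → ZMod 2 := fun i j =>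
    (((G i).dist (r i) (tgt i j) : ZMod 2)) + (((G j).dist (r j) (tgt j i) : ZMod 2))
  have hsym : ∀ i j, cZ i j = cZ j i := fun i j => add_comm _ _
  obtain ⟨ψ, hψ⟩ := SyncWalks.tree_potential hT ⟨0, hk⟩ cZ hsym
  -- starting vertices of the right parity class
  let u : (i : Fin k) → W i := fun i => if ψ i = 0 then r i else bv i
  have hφu : ∀ i, ((G i).dist (r i) (u i)) % 2 = (ψ i).val := by
    intro i
    by_cases h : ψ i = 0
    · have hu : u i = r i := if_pos h
      rw [hu, SimpleGraph.dist_self, h]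
      simp
    · have h1 : ψ i = 1 := by
        have h2 : ∀ z : ZMod 2, z = 0 ∨ z = 1 := by decide
        rcases h2 (ψ i) with h0 | h1
        · exact absurd h0 h
        · exact h1
      have hu : u i = bv i := if_neg h
      have hd : (G i).dist (r i) (bv i) = 1 := by
        have hle : (G i).dist (r i) (bv i) ≤ 1 := by
          have := SimpleGraph.dist_le (SimpleGraph.Walk.cons (hrb i) SimpleGraph.Walk.nil)
          simpa using this
        have hpos : 0 < (G i).dist (r i) (bv i) :=
          ((hrb i).reachable).pos_dist_of_ne (hrb i).ne
        omega
      rw [hu, hd, h1]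
      simp [ZMod.val_one]
  -- the rendezvous times
  let time : Fin k → Fin k → ℕ := fun i j =>
    B * (k * (min i j).val + (max i j).val) +
      (ψ (min i j) + (((G (min i j)).dist (r (min i j))
        (tgt (min i j) (max i j)) : ℕ) : ZMod 2)).val
  have htime : ∀ i j, time i j =
      B * (k * (min i j).val + (max i j).val) +
      (ψ (min i j) + (((G (min i j)).dist (r (min i j))
        (tgt (min i j) (max i j)) : ℕ) : ZMod 2)).val := fun _ _ => rfl
  have htime_symm : ∀ i j, time i j = time j i := by
    intro i j
    rw [htime, htime, min_comm j i, max_comm j i]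
  have heps_lt : ∀ x : ZMod 2, x.val < 2 := fun x => x.val_lt
  -- lower bound on the block index
  have hbl_pos : ∀ i j : Fin k, i ≠ j → 1 ≤ k * (min i j).val + (max i j).val := by
    intro i j hij
    have : (min i j) < (max i j) := min_lt_max.mpr hij
    have : (min i j).val < (max i j).val := this
    omega
  have hbl_ub : ∀ i j : Fin k, k * (min i j).val + (max i j).val ≤ k * k - 1 := by
    intro i j
    have h1 : (min i j).val ≤ k - 1 := by have := (min i j).isLt; omega
    have h2 : (max i j).val ≤ k - 1 := by have := (max i j).isLt; omega
    obtain ⟨m, rfl⟩ : ∃ m, k = m + 1 := ⟨k - 1, by omega⟩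
    have h1' : (min i j).val ≤ m := by omega
    have h3 : (m + 1) * (min i j).val ≤ (m + 1) * m := Nat.mul_le_mul_left (m + 1) h1'
    have h5 : (m + 1) * m + (m + 1) = (m + 1) * (m + 1) := by ring
    omega
  have htime_lb : ∀ i j : Fin k, i ≠ j → B ≤ time i j := by
    intro i j hij
    rw [htime]
    have h1 : B * 1 ≤ B * (k * (min i j).val + (max i j).val) :=
      Nat.mul_le_mul_left B (hbl_pos i j hij)
    omega
  have htime_ub : ∀ i j : Fin k, time i j + B ≤ n := by
    intro i j
    rw [htime, hn]
    have h1 : B * (k * (min i j).val + (max i j).val) ≤ B * (k * k - 1) :=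
      Nat.mul_le_mul_left B (hbl_ub i j)
    have h2 : B * (k * k + 2) = B * (k * k - 1) + B * 3 := by
      rw [← Nat.mul_add]
      congr 1
      omega
    have h3 := heps_lt (ψ (min i j) + (((G (min i j)).dist (r (min i j))
        (tgt (min i j) (max i j)) : ℕ) : ZMod 2))
    omega
  -- times of distinct rendezvous of a common graph are far apart
  have htime_gap : ∀ i j j' : Fin k, j ≠ j' → j ≠ i → j' ≠ i →
      time i j + (B - 1) ≤ time i j' ∨ time i j' + (B - 1) ≤ time i j := by
    intro i j j' hjj' hji hj'i
    have hbne : k * (min i j).val + (max i j).val ≠ k * (min i j').val + (max i j').val := by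
      intro heq
      obtain ⟨hmin, hmax⟩ := SyncWalks.encode_inj (by omega) (max i j).isLt (max i j').isLt heq
      have hmin' : min i j = min i j' := Fin.ext hmin
      have hmax' : max i j = max i j' := Fin.ext hmax
      rcases SyncWalks.minmax_cases i j with ⟨ha, hb⟩ | ⟨ha, hb⟩ <;>
        rcases SyncWalks.minmax_cases i j' with ⟨ha', hb'⟩ | ⟨ha', hb'⟩
      · exact hjj' (by rw [← hb, ← hb', hmax'])
      · exact hj'i (by rw [← ha', ← hmin', ha])
      · exact hji (by rw [← ha, hmin', ha'])
      · exact hjj' (by rw [← ha, ← ha', hmin'])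
    rcases Nat.lt_or_ge (k * (min i j).val + (max i j).val)
      (k * (min i j').val + (max i j').val) with h | h
    · left
      rw [htime, htime]
      have h1 : B * (k * (min i j).val + (max i j).val) + B ≤
          B * (k * (min i j').val + (max i j').val) := by
        rw [← Nat.mul_succ]
        exact Nat.mul_le_mul_left B h
      have h2 := heps_lt (ψ (min i j) + (((G (min i j)).dist (r (min i j))
          (tgt (min i j) (max i j)) : ℕ) : ZMod 2))
      omega
    · right
      have h' : k * (min i j').val + (max i j').val < k * (min i j).val + (max i j).val := by
        omega
      rw [htime, htime]
      have h1 : B * (k * (min i j').val + (max i j').val) + B ≤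
          B * (k * (min i j).val + (max i j).val) := by
        rw [← Nat.mul_succ]
        exact Nat.mul_le_mul_left B h'
      have h2 := heps_lt (ψ (min i j') + (((G (min i j')).dist (r (min i j'))
          (tgt (min i j') (max i j')) : ℕ) : ZMod 2))
      omega
  -- parity of the rendezvous times
  have htime_par : ∀ i j : Fin k, T.Adj i j → time i j % 2 =
      ((G i).dist (r i) (u i) + (G i).dist (r i) (tgt i j)) % 2 := by
    intro i j hadj
    have hij : i ≠ j := hadj.ne
    have hZ : ψ (min i j) + (((G (min i j)).dist (r (min i j))
        (tgt (min i j) (max i j)) : ℕ) : ZMod 2) =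
        ψ i + (((G i).dist (r i) (tgt i j) : ℕ) : ZMod 2) := by
      rcases SyncWalks.minmax_cases i j with ⟨ha, hb⟩ | ⟨ha, hb⟩
      · rw [ha, hb]
      · rw [ha, hb]
        have he := hψ i j hadj
        have h2 : ∀ a b x y : ZMod 2, a + b = x + y → b + y = a + x := by decide
        exact h2 _ _ _ _ he
    have heps : (ψ (min i j) + (((G (min i j)).dist (r (min i j))
        (tgt (min i j) (max i j)) : ℕ) : ZMod 2)).val =
        (ψ i + (((G i).dist (r i) (tgt i j) : ℕ) : ZMod 2)).val := congrArg ZMod.val hZ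
    have hval : (ψ i + (((G i).dist (r i) (tgt i j) : ℕ) : ZMod 2)).val =
        ((ψ i).val + (((G i).dist (r i) (tgt i j) : ℕ) : ZMod 2).val) % 2 :=
      ZMod.val_add _ _
    have hval2 : ((((G i).dist (r i) (tgt i j) : ℕ)) : ZMod 2).val =
        ((G i).dist (r i) (tgt i j)) % 2 := ZMod.val_natCast _ _
    have hblock : time i j = 2 * (m0 * (k * (min i j).val + (max i j).val)) +
        (ψ (min i j) + (((G (min i j)).dist (r (min i j))
          (tgt (min i j) (max i j)) : ℕ) : ZMod 2)).val := by
      rw [htime, hm0]; ring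
    have hu2 := hφu i
    omega
  -- build the walk in each graph
  have key : ∀ i : Fin k, ∃ f : ℕ → W i, f 0 = u i ∧ f n = u i ∧
      (∀ l < n, (G i).Adj (f l) (f (l + 1))) ∧ (∀ x : W i, ∃ l ≤ n, f l = x) ∧
      ∀ j ∈ T.neighborFinset i, f (time i j) = tgt i j := by
    intro i
    set Di := 2 * Fintype.card (W i) * Fintype.card (W i) + 2 * Fintype.card (W i) + 2 with hDi
    have hDiB : Di + 2 ≤ B := by
      have h1 := hcard i
      have h2 : Fintype.card (W i) * Fintype.card (W i) ≤ C * C :=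
        Nat.mul_le_mul h1 h1
      have hDi' : Di = 2 * (Fintype.card (W i) * Fintype.card (W i)) +
          2 * Fintype.card (W i) + 2 := by rw [hDi]; ring
      have hB' : B = 2 * (C * C) + 2 * C + 4 := by rw [hB]; ring
      omega
    set L0 : List (ℕ × W i) :=
      (T.neighborFinset i).toList.map (fun j => (time i j, tgt i j)) with hL0
    set rel : ℕ × W i → ℕ × W i → Prop := fun p q => p.1 ≤ q.1 with hrel
    haveI : DecidableRel rel := fun p q => Nat.decLe _ _
    haveI : IsTotal (ℕ × W i) rel := ⟨fun a b => le_total a.1 b.1⟩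
    haveI : IsTrans (ℕ × W i) rel := ⟨fun a b c h1 h2 => le_trans h1 h2⟩
    set L := List.insertionSort rel L0 with hL
    have hperm : List.Perm L L0 := List.perm_insertionSort rel L0
    have hsorted : List.Pairwise rel L := List.pairwise_insertionSort rel L0
    have hmemadj : ∀ j ∈ (T.neighborFinset i).toList, T.Adj i j := by
      intro j hj
      exact (T.mem_neighborFinset i j).mp (Finset.mem_toList.mp hj)
    have hgap0 : L0.Pairwise (fun p q => p.1 + (B - 1) ≤ q.1 ∨ q.1 + (B - 1) ≤ p.1) := by
      rw [hL0, List.pairwise_map]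
      refine List.Pairwise.imp_of_mem ?_ (T.neighborFinset i).nodup_toList
      intro j j' hj hj' hne
      exact htime_gap i j j' hne ((hmemadj j hj).ne') ((hmemadj j' hj').ne')
    have hgapL : L.Pairwise (fun p q => p.1 + (B - 1) ≤ q.1 ∨ q.1 + (B - 1) ≤ p.1) :=
      (hperm.pairwise_iff (fun h => h.symm)).mpr hgap0
    have hpairwise : L.Pairwise (fun p q => p.1 + Di ≤ q.1) := by
      refine List.Pairwise.imp₂ (fun p q h1 h2 => ?_) hsorted hgapL
      have : p.1 ≤ q.1 := h1
      omega
    have hmemL : ∀ p ∈ L, Di ≤ p.1 ∧ p.1 + Di ≤ n ∧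
        p.1 % 2 = ((G i).dist (r i) (u i) + (G i).dist (r i) p.2) % 2 := by
      intro p hp
      have hp0 : p ∈ L0 := hperm.subset hp
      rw [hL0, List.mem_map] at hp0
      obtain ⟨j, hj, rfl⟩ := hp0
      have hadj : T.Adj i j := hmemadj j hj
      refine ⟨?_, ?_, ?_⟩
      · have := htime_lb i j hadj.ne
        omega
      · have := htime_ub i j
        omega
      · exact htime_par i j hadj
    obtain ⟨f, hf0, hf1, hf2, hf3, hf4⟩ := SyncWalks.build (hconn i) (hrb i) L (u i) (u i) n
      hpairwise hmemL (by have := htime_ub i i; omega) (by omega)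
    refine ⟨f, hf0, hf1, hf2, hf3, ?_⟩
    intro j hj
    exact hf4 (time i j, tgt i j)
      (hperm.mem_iff.mpr (by rw [hL0, List.mem_map]; exact ⟨j, Finset.mem_toList.mpr hj, rfl⟩))
  choose v hv using key
  refine ⟨n, hnpos, v, ?_, ?_, ?_, ?_⟩
  · exact fun i => ((hv i).2.1).trans ((hv i).1).symm
  · exact fun i => (hv i).2.2.1
  · intro i w
    obtain ⟨l, hl, hfl⟩ := (hv i).2.2.2.1 w
    rcases Nat.lt_or_ge l n with h | h
    · exact ⟨l, h, hfl⟩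
    · have hln : l = n := by omega
      refine ⟨0, hnpos, ?_⟩
      rw [(hv i).1, ← (hv i).2.1, ← hln, hfl]
  · intro i j hij hadj
    refine ⟨time i j, by have := htime_ub i j; omega, ?_, ?_⟩
    · have := (hv i).2.2.2.2 j ((T.mem_neighborFinset i j).mpr hadj)
      rw [this, htgt_lt i j hij]
    · have := (hv j).2.2.2.2 i ((T.mem_neighborFinset j i).mpr hadj.symm)
      rw [htime_symm i j, this, htgt_ge j i (by omega)]
end
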